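/- arXiv:1210.4809 — 2 statements merged into one kernel-verified Lean document; each statement's English description precedes it below -/
import Mathlib

section
/- Every worm A is equivalent in GLP_Λ to some worm in worm normal form whose modalities are among those of A. -/
inductive Formula (L : Type) : Type where
  | bot : Formula L
  | var : Nat → Formula L
  | imp : Formula L → Formula L → Formula L
  | box : L → Formula L → Formula L

namespace Formula

variable {L : Type}

def neg (φ : Formula L) : Formula L := imp φ bot
def top : Formula L := neg bot
def and (φ ψ : Formula L) : Formula L := neg (imp φ ψ.neg)
def or (φ ψ : Formula L) : Formula L := imp φ.neg ψ
def iff (φ ψ : Formula L) : Formula L := (imp φ ψ).and (imp ψ φ)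
def dia (α : L) (φ : Formula L) : Formula L := neg (box α φ.neg)

end Formula

open Formula

/-- Provability in the polymodal provability logic `GLP_Λ` over a linear order. -/
inductive GLP {L : Type} [LinearOrder L] : Formula L → Prop where
  | k1 : ∀ φ ψ : Formula L, GLP (φ.imp (ψ.imp φ))
  | k2 : ∀ φ ψ χ : Formula L, GLP ((φ.imp (ψ.imp χ)).imp ((φ.imp ψ).imp (φ.imp χ)))
  | k3 : ∀ φ ψ : Formula L, GLP ((φ.neg.imp ψ.neg).imp (ψ.imp φ))
  | dist : ∀ (α : L) (φ ψ : Formula L), GLP ((Formula.box α (φ.imp ψ)).imp ((Formula.box α φ).imp (Formula.box α ψ)))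
  | lob : ∀ (α : L) (φ : Formula L), GLP ((Formula.box α ((Formula.box α φ).imp φ)).imp (Formula.box α φ))
  | trans : ∀ (α β : L) (φ : Formula L), α ≤ β → GLP ((Formula.box α φ).imp (Formula.box β (Formula.box α φ)))
  | negintro : ∀ (α β : L) (φ : Formula L), α < β → GLP ((dia α φ).imp (Formula.box β (dia α φ)))
  | mono : ∀ (α β : L) (φ : Formula L), α ≤ β → GLP ((Formula.box α φ).imp (Formula.box β φ))
  | mp : ∀ φ ψ : Formula L, GLP (φ.imp ψ) → GLP φ → GLP ψ
  | nec : ∀ (α : L) (φ : Formula L), GLP φ → GLP (Formula.box α φ)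

/-- The worm (iterated consistency statement) associated to a list of modalities. -/
def worm {L : Type} : List L → Formula L
  | [] => Formula.top
  | α :: w => Formula.dia α (worm w)

/-- `Lt α A B` iff `GLP ⊢ B → ⟨α⟩A`. -/
def Lt {L : Type} [LinearOrder L] (α : L) (A B : List L) : Prop :=
  GLP ((worm B).imp (Formula.dia α (worm A)))

def Le {L : Type} [LinearOrder L] (α : L) (A B : List L) : Prop :=
  Lt α A B ∨ A = B

/-- Join a list of blocks, separating consecutive blocks by the modality `α`. -/
def joinSep {L : Type} (α : L) : List (List L) → List L
  | [] => []
  | [p] => p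
  | p :: ps => p ++ α :: joinSep α ps

/-- Worm normal form. -/
inductive WNF {L : Type} [LinearOrder L] [SuccOrder L] : List L → Prop where
  | nil : WNF []
  | node (α : L) (parts : List (List L))
      (hlen : 2 ≤ parts.length)
      (hmods : ∀ p ∈ parts, ∀ β ∈ p, α < β)
      (hwnf : ∀ p ∈ parts, WNF p)
      (hord : parts.Chain' (Le (Order.succ α)))
      : WNF (joinSep α parts)

section Prop1
variable {L : Type} [LinearOrder L]
open Formula

namespace GLP

theorem mp' {φ ψ : Formula L} (h : GLP (φ.imp ψ)) (h2 : GLP φ) : GLP ψ := GLP.mp _ _ h h2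

theorem imp_id (φ : Formula L) : GLP (φ.imp φ) :=
  mp' (mp' (GLP.k2 φ (φ.imp φ) φ) (GLP.k1 φ (φ.imp φ))) (GLP.k1 φ φ)

theorem imp_intro {φ ψ : Formula L} (h : GLP ψ) : GLP (φ.imp ψ) := mp' (GLP.k1 _ _) h

theorem apS {φ ψ χ : Formula L} (h : GLP (φ.imp (ψ.imp χ))) (h2 : GLP (φ.imp ψ)) :
    GLP (φ.imp χ) := mp' (mp' (GLP.k2 _ _ _) h) h2

theorem imp_trans {φ ψ χ : Formula L} (h1 : GLP (φ.imp ψ)) (h2 : GLP (ψ.imp χ)) :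
    GLP (φ.imp χ) := apS (imp_intro h2) h1

/-- closed composition: (ψ→χ) → ((φ→ψ) → (φ→χ)) -/
theorem comp_thm' (φ ψ χ : Formula L) :
    GLP ((ψ.imp χ).imp ((φ.imp ψ).imp (φ.imp χ))) :=
  imp_trans (GLP.k1 _ _) (GLP.k2 _ _ _)

theorem swap_thm (a b c : Formula L) : GLP ((a.imp (b.imp c)).imp (b.imp (a.imp c))) :=
  imp_trans (GLP.k2 a b c) (apS (comp_thm' b (a.imp b) (a.imp c)) (imp_intro (GLP.k1 b a)))

theorem imp_swap {a b c : Formula L} (h : GLP (a.imp (b.imp c))) : GLP (b.imp (a.imp c)) :=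
  mp' (swap_thm a b c) h

theorem comp_left {φ ψ χ : Formula L} (h : GLP (φ.imp ψ)) :
    GLP ((ψ.imp χ).imp (φ.imp χ)) := mp' (imp_swap (comp_thm' φ ψ χ)) h

theorem comp_right {φ ψ χ : Formula L} (h : GLP (ψ.imp χ)) :
    GLP ((φ.imp ψ).imp (φ.imp χ)) := mp' (comp_thm' φ ψ χ) h

/-- closed contraposition: (b→c)→(¬c→¬b) -/
theorem cp_thm (b c : Formula L) : GLP ((b.imp c).imp (c.neg.imp b.neg)) :=
  imp_swap (comp_thm' b c Formula.bot)

theorem swap_right {a b c d : Formula L} (h : GLP (a.imp (b.imp (c.imp d)))) :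
    GLP (a.imp (c.imp (b.imp d))) := imp_trans h (swap_thm b c d)

theorem top_prov : GLP (Formula.top (L := L)) := imp_id Formula.bot

theorem imp_top (φ : Formula L) : GLP (φ.imp Formula.top) := imp_intro top_prov

theorem efq (φ : Formula L) : GLP (Formula.bot.imp φ) :=
  mp' (GLP.k3 φ Formula.bot) (imp_intro (imp_id Formula.bot))

theorem dni (φ : Formula L) : GLP (φ.imp φ.neg.neg) := imp_swap (imp_id φ.neg)

theorem dne (φ : Formula L) : GLP (φ.neg.neg.imp φ) :=
  mp' (GLP.k3 φ φ.neg.neg) (dni φ.neg)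

/-- from φ→ψ infer ¬ψ→¬φ -/
theorem cpR {φ ψ : Formula L} (h : GLP (φ.imp ψ)) : GLP (ψ.neg.imp φ.neg) :=
  comp_left h

/-- from ¬φ→¬ψ infer ψ→φ -/
theorem cpL {φ ψ : Formula L} (h : GLP (φ.neg.imp ψ.neg)) : GLP (ψ.imp φ) :=
  mp' (GLP.k3 _ _) h

/-- from ¬φ→ψ infer ¬ψ→φ -/
theorem cpL' {φ ψ : Formula L} (h : GLP (φ.neg.imp ψ)) : GLP (ψ.neg.imp φ) :=
  imp_trans (cpR h) (dne φ)

/-- φ→(¬φ→χ) -/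
theorem absurd_thm (φ χ : Formula L) : GLP (φ.imp (φ.neg.imp χ)) :=
  imp_trans (dni φ) (comp_right (efq χ))

theorem and_intro (φ ψ : Formula L) : GLP (φ.imp (ψ.imp (φ.and ψ))) :=
  swap_right (imp_swap (imp_id (φ.imp ψ.neg)))

theorem and_left (φ ψ : Formula L) : GLP ((φ.and ψ).imp φ) :=
  cpL' (imp_swap (absurd_thm φ ψ.neg))

theorem and_right (φ ψ : Formula L) : GLP ((φ.and ψ).imp ψ) :=
  cpL' (GLP.k1 ψ.neg φ)

theorem and_intro' {φ ψ : Formula L} (h1 : GLP φ) (h2 : GLP ψ) : GLP (φ.and ψ) :=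
  mp' (mp' (and_intro φ ψ) h1) h2

/-- from χ→φ and χ→ψ infer χ→(φ∧ψ) -/
theorem imp_and {χ φ ψ : Formula L} (h1 : GLP (χ.imp φ)) (h2 : GLP (χ.imp ψ)) :
    GLP (χ.imp (φ.and ψ)) := apS (imp_trans h1 (and_intro φ ψ)) h2

/-- from φ→(ψ→χ) infer (φ∧ψ)→χ -/
theorem and_imp_of {φ ψ χ : Formula L} (h : GLP (φ.imp (ψ.imp χ))) :
    GLP ((φ.and ψ).imp χ) := apS (imp_trans (and_left φ ψ) h) (and_right φ ψ)

/-- monotonicity of ∧ -/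
theorem and_mono {φ φ' ψ ψ' : Formula L} (h1 : GLP (φ.imp φ')) (h2 : GLP (ψ.imp ψ')) :
    GLP ((φ.and ψ).imp (φ'.and ψ')) :=
  imp_and (imp_trans (and_left φ ψ) h1) (imp_trans (and_right φ ψ) h2)

theorem iff_intro {φ ψ : Formula L} (h1 : GLP (φ.imp ψ)) (h2 : GLP (ψ.imp φ)) :
    GLP (φ.iff ψ) := and_intro' h1 h2

theorem iff_l {φ ψ : Formula L} (h : GLP (φ.iff ψ)) : GLP (φ.imp ψ) := mp' (and_left _ _) h

theorem iff_r {φ ψ : Formula L} (h : GLP (φ.iff ψ)) : GLP (ψ.imp φ) := mp' (and_right _ _) h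

theorem iff_refl (φ : Formula L) : GLP (φ.iff φ) := iff_intro (imp_id φ) (imp_id φ)

theorem iff_symm {φ ψ : Formula L} (h : GLP (φ.iff ψ)) : GLP (ψ.iff φ) :=
  iff_intro (iff_r h) (iff_l h)

theorem iff_trans {φ ψ χ : Formula L} (h1 : GLP (φ.iff ψ)) (h2 : GLP (ψ.iff χ)) :
    GLP (φ.iff χ) :=
  iff_intro (imp_trans (iff_l h1) (iff_l h2)) (imp_trans (iff_r h2) (iff_r h1))

theorem neg_imp_of_prov_neg {φ ψ : Formula L} (h : GLP φ.neg) : GLP (φ.imp ψ) :=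
  imp_trans h (efq ψ)

end GLP
end Prop1
section Modal1
variable {L : Type} [LinearOrder L]
open Formula

namespace GLP

theorem box_mono {a : L} {φ ψ : Formula L} (h : GLP (φ.imp ψ)) :
    GLP ((Formula.box a φ).imp (Formula.box a ψ)) :=
  mp' (GLP.dist a φ ψ) (GLP.nec a _ h)

theorem dia_mono {a : L} {φ ψ : Formula L} (h : GLP (φ.imp ψ)) :
    GLP ((Formula.dia a φ).imp (Formula.dia a ψ)) :=
  cpR (box_mono (cpR h))

theorem dia_level {a b : L} (hab : a ≤ b) (φ : Formula L) :
    GLP ((Formula.dia b φ).imp (Formula.dia a φ)) :=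
  cpR (GLP.mono a b φ.neg hab)

theorem box_collect {a : L} (φ ψ : Formula L) :
    GLP ((Formula.box a φ).imp ((Formula.box a ψ).imp (Formula.box a (φ.and ψ)))) :=
  imp_trans (box_mono (and_intro φ ψ)) (GLP.dist a ψ (φ.and ψ))

/-- ⟨a⟩φ → ([a]ψ → ⟨a⟩(φ∧ψ)) -/
theorem dia_box_imp (a : L) (φ ψ : Formula L) :
    GLP ((Formula.dia a φ).imp ((Formula.box a ψ).imp (Formula.dia a (φ.and ψ)))) := by
  have t0 : GLP (((φ.and ψ).neg).imp (ψ.imp φ.neg)) :=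
    imp_swap (imp_trans (imp_swap (and_intro φ ψ)) (cp_thm φ (φ.and ψ)))
  have t2 : GLP ((Formula.box a (φ.and ψ).neg).imp
      ((Formula.box a ψ).imp (Formula.box a φ.neg))) :=
    imp_trans (box_mono t0) (GLP.dist a ψ φ.neg)
  -- [a]ψ → ([a]¬(φ∧ψ) → [a]¬φ) , contrapose inner:
  have t3 : GLP ((Formula.box a ψ).imp
      (((Formula.box a φ.neg).imp Formula.bot).imp (((Formula.box a (φ.and ψ).neg)).imp Formula.bot))) :=
    imp_trans (imp_swap t2) (cp_thm _ _)
  exact imp_swap t3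

theorem dia_box {a : L} {φ ψ : Formula L} :
    GLP (((Formula.dia a φ).and (Formula.box a ψ)).imp (Formula.dia a (φ.and ψ))) :=
  and_imp_of (dia_box_imp a φ ψ)

/-- L7 : for b < a, ⟨a⟩φ ∧ ⟨b⟩ψ → ⟨a⟩(φ ∧ ⟨b⟩ψ) -/
theorem dia_merge {a b : L} (hba : b < a) (φ ψ : Formula L) :
    GLP (((Formula.dia a φ).and (Formula.dia b ψ)).imp (Formula.dia a (φ.and (Formula.dia b ψ)))) :=
  imp_trans (and_mono (imp_id _) (GLP.negintro b a ψ hba)) dia_box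

/-- M7 : for c ≤ a, ⟨a⟩⟨c⟩φ → ⟨c⟩φ -/
theorem dia_flatten {a c : L} (hca : c ≤ a) (φ : Formula L) :
    GLP ((Formula.dia a (Formula.dia c φ)).imp (Formula.dia c φ)) := by
  have h1 : GLP ((Formula.box c φ.neg).imp (Formula.box a (Formula.box c φ.neg))) :=
    GLP.trans c a φ.neg hca
  have h2 : GLP ((Formula.box a (Formula.box c φ.neg)).imp
      (Formula.box a (Formula.dia c φ).neg)) := box_mono (dni _)
  exact cpR (imp_trans h1 h2)

/-- Löb collapse : if ⊢ φ → ⟨a⟩φ then ⊢ ¬φ. -/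
theorem lob_collapse {a : L} {φ : Formula L} (h : GLP (φ.imp (Formula.dia a φ))) :
    GLP φ.neg := by
  have h' : GLP ((Formula.box a φ.neg).imp φ.neg) := imp_swap h
  exact mp' h' (mp' (GLP.lob a φ.neg) (GLP.nec a _ h'))

/-- if ⊢ ⟨a⟩φ then ⊢ ⊥. -/
theorem dia_collapse {a : L} {φ : Formula L} (h : GLP (Formula.dia a φ)) :
    GLP (Formula.bot (L := L)) := by
  have h' : GLP (Formula.dia a (Formula.top (L := L))) := mp' (dia_mono (imp_top φ)) h
  have := lob_collapse (a := a) (φ := Formula.top (L := L)) (imp_intro h')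
  exact mp' this top_prov

end GLP
end Modal1
section Worms
set_option linter.unusedSectionVars false
variable {L : Type} [LinearOrder L]
open Formula

def dias : List L → Formula L → Formula L
  | [], φ => φ
  | a :: w, φ => Formula.dia a (dias w φ)

@[simp] lemma dias_nil (φ : Formula L) : dias [] φ = φ := rfl
@[simp] lemma dias_cons (a : L) (w : List L) (φ : Formula L) :
    dias (a::w) φ = Formula.dia a (dias w φ) := rfl

lemma worm_nil : worm ([] : List L) = Formula.top := rfl
lemma worm_cons (a : L) (w : List L) : worm (a::w) = Formula.dia a (worm w) := rfl

lemma worm_eq_dias (A : List L) : worm A = dias A Formula.top := by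
  induction A with
  | nil => rfl
  | cons a w ih => simp [worm, ih]

lemma dias_append (A B : List L) (φ : Formula L) : dias (A++B) φ = dias A (dias B φ) := by
  induction A with
  | nil => rfl
  | cons a w ih => simp [ih]

lemma worm_append (A B : List L) : worm (A++B) = dias A (worm B) := by
  rw [worm_eq_dias, dias_append, ← worm_eq_dias]

lemma dias_mono {φ ψ : Formula L} (P : List L) (h : GLP (φ.imp ψ)) :
    GLP ((dias P φ).imp (dias P ψ)) := by
  induction P with
  | nil => exact h
  | cons a P ih => exact GLP.dia_mono ih

lemma dias_iff {φ ψ : Formula L} (P : List L) (h : GLP (φ.iff ψ)) :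
    GLP ((dias P φ).iff (dias P ψ)) :=
  GLP.iff_intro (dias_mono P (GLP.iff_l h)) (dias_mono P (GLP.iff_r h))

lemma worm_trunc (P Q : List L) : GLP ((worm (P++Q)).imp (worm P)) := by
  rw [worm_append, worm_eq_dias P]; exact dias_mono P (GLP.imp_top _)

lemma worm_congr_suffix {T T' : Formula L} (R : List L) (h : GLP (T.iff T')) :
    GLP ((dias R T).iff (dias R T')) := dias_iff R h

lemma worm_pull {γ : L} {P : List L} (h : ∀ m ∈ P, γ ≤ m) (T : List L) :
    GLP ((worm (P ++ γ :: T)).imp (Formula.dia γ (worm T))) := by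
  induction P with
  | nil => exact GLP.imp_id _
  | cons m P ih =>
      have hm : γ ≤ m := h m (List.mem_cons_self)
      have ih' := ih (fun x hx => h x (List.mem_cons_of_mem _ hx))
      exact GLP.imp_trans (GLP.dia_mono ih') (GLP.dia_flatten hm _)

lemma worm_split_fwd {γ : L} {P : List L} (h : ∀ m ∈ P, γ ≤ m) (T : List L) :
    GLP ((worm (P++γ::T)).imp ((worm P).and (Formula.dia γ (worm T)))) :=
  GLP.imp_and (worm_trunc P (γ::T)) (worm_pull h T)

lemma worm_split_bwd {γ : L} {P : List L} (h : ∀ m ∈ P, γ < m) (T : List L) :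
    GLP (((worm P).and (Formula.dia γ (worm T))).imp (worm (P++γ::T))) := by
  induction P with
  | nil => exact GLP.and_right _ _
  | cons m P ih =>
      have hm : γ < m := h m (List.mem_cons_self)
      have ih' := ih (fun x hx => h x (List.mem_cons_of_mem _ hx))
      exact GLP.imp_trans (GLP.dia_merge hm _ _) (GLP.dia_mono ih')

lemma worm_split_iff {γ : L} {P : List L} (h : ∀ m ∈ P, γ < m) (T : List L) :
    GLP ((worm (P++γ::T)).iff ((worm P).and (Formula.dia γ (worm T)))) :=
  GLP.iff_intro (worm_split_fwd (fun m hm => le_of_lt (h m hm)) T) (worm_split_bwd h T)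

/-- a nonempty worm implies ⟨γ⟩⊤ for γ below its head -/
lemma worm_head_dia_top {γ m : L} (hm : γ ≤ m) (A : List L) :
    GLP ((worm (m::A)).imp (Formula.dia γ Formula.top)) :=
  GLP.imp_trans (GLP.dia_mono (GLP.imp_top _)) (GLP.dia_level hm _)

/-- worm equivalence rules -/
lemma worm_iff_imp {A B : List L} (h : GLP ((worm A).iff (worm B))) :
    GLP ((worm A).imp (worm B)) := GLP.iff_l h

end Worms
section JoinSep
set_option linter.unusedSectionVars false
variable {L : Type} [LinearOrder L]
open Formula

@[simp] lemma joinSep_nil (γ : L) : joinSep γ [] = [] := rfl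
@[simp] lemma joinSep_single (γ : L) (p : List L) : joinSep γ [p] = p := rfl

lemma joinSep_cons (γ : L) (p : List L) {ps : List (List L)} (h : ps ≠ []) :
    joinSep γ (p :: ps) = p ++ γ :: joinSep γ ps := by
  cases ps with
  | nil => exact absurd rfl h
  | cons q qs => rfl

lemma joinSep_append (γ : L) {ps qs : List (List L)} (hp : ps ≠ []) (hq : qs ≠ []) :
    joinSep γ (ps ++ qs) = joinSep γ ps ++ γ :: joinSep γ qs := by
  induction ps with
  | nil => exact absurd rfl hp
  | cons p ps ih =>
      cases ps with
      | nil =>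
          simp [joinSep_cons γ p (by simpa using hq)]
      | cons r rs =>
          rw [List.cons_append, joinSep_cons γ p (by simp), joinSep_cons γ p (by simp),
            ih (by simp)]
          simp

lemma mem_joinSep {γ : L} {ps : List (List L)} {m : L} (h : m ∈ joinSep γ ps) :
    m = γ ∨ ∃ p ∈ ps, m ∈ p := by
  induction ps with
  | nil => simp [joinSep] at h
  | cons p ps ih =>
      cases ps with
      | nil =>
          simp at h
          exact Or.inr ⟨p, by simp, h⟩
      | cons q qs =>
          rw [joinSep_cons γ p (by simp)] at h
          rcases List.mem_append.1 h with h1 | h2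
          · exact Or.inr ⟨p, by simp, h1⟩
          · rcases List.mem_cons.1 h2 with rfl | h3
            · exact Or.inl rfl
            · rcases ih h3 with h4 | ⟨r, hr, hm⟩
              · exact Or.inl h4
              · exact Or.inr ⟨r, List.mem_cons_of_mem _ hr, hm⟩

lemma joinSep_mods {γ : L} {ps : List (List L)} (hmods : ∀ p ∈ ps, ∀ m ∈ p, γ < m) :
    ∀ m ∈ joinSep γ ps, γ ≤ m := by
  intro m hm
  rcases mem_joinSep hm with rfl | ⟨p, hp, hmp⟩
  · exact le_refl _
  · exact le_of_lt (hmods p hp m hmp)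

lemma length_le_joinSep {γ : L} {ps : List (List L)} {p : List L} (h : p ∈ ps) :
    p.length ≤ (joinSep γ ps).length := by
  induction ps with
  | nil => simp at h
  | cons q qs ih =>
      cases qs with
      | nil => rw [List.mem_singleton] at h; subst h; simp
      | cons r rs =>
          rw [joinSep_cons γ q (by simp)]
          rcases List.mem_cons.1 h with rfl | h2
          · simp
          · have := ih h2
            simp only [List.length_append, List.length_cons]
            omega

/-- Lt is transitive -/
lemma Lt_trans {β : L} {A B C : List L} (h1 : Lt β A B) (h2 : Lt β B C) : Lt β A C :=
  GLP.imp_trans h2 (GLP.imp_trans (GLP.dia_mono h1) (GLP.dia_flatten (le_refl β) _))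

lemma Le_trans' {β : L} {A B C : List L} (h1 : Le β A B) (h2 : Le β B C) : Le β A C := by
  rcases h1 with h1 | rfl
  · rcases h2 with h2 | rfl
    · exact Or.inl (Lt_trans h1 h2)
    · exact Or.inl h1
  · exact h2

lemma chain'_le_pairwise {β : L} {l : List (List L)} (h : List.Chain' (Le β) l) :
    List.Pairwise (Le β) l := by
  haveI : IsTrans (List L) (Le β) := ⟨fun _ _ _ => Le_trans'⟩
  exact List.isChain_iff_pairwise.1 h

/-- every earlier element is `Le β` below the last -/
lemma chain'_le_last {β : L} {l : List (List L)} (h : List.Chain' (Le β) l)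
    (hne : l ≠ []) {p : List L} (hp : p ∈ l.dropLast) : Le β p (l.getLast hne) := by
  have hpw := chain'_le_pairwise h
  rw [← List.dropLast_append_getLast hne] at hpw
  exact ((List.pairwise_append.1 hpw).2.2) p hp _ (by simp)

/-- parts data for a γ-normal form -/
def NFP [SuccOrder L] (γ : L) (ps : List (List L)) : Prop :=
  (∀ p ∈ ps, ∀ m ∈ p, γ < m) ∧ (∀ p ∈ ps, WNF p) ∧ List.Chain' (Le (Order.succ γ)) ps

lemma NFP_wnf [SuccOrder L] {γ : L} {ps : List (List L)} (h : NFP γ ps) :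
    WNF (joinSep γ ps) := by
  match ps, h with
  | [], _ => exact WNF.nil
  | [p], h => exact h.2.1 p (by simp)
  | p :: q :: qs, h => exact WNF.node γ (p::q::qs) (by simp only [List.length_cons]; omega) h.1 h.2.1 h.2.2

lemma NFP_sub [SuccOrder L] {γ : L} {ps qs : List (List L)} (h : NFP γ (ps ++ qs)) :
    NFP γ ps ∧ NFP γ qs := by
  obtain ⟨h1, h2, h3⟩ := h
  simp only [List.Chain', List.isChain_append] at h3
  exact ⟨⟨fun p hp => h1 p (by simp [hp]), fun p hp => h2 p (by simp [hp]), h3.1⟩,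
    ⟨fun p hp => h1 p (by simp [hp]), fun p hp => h2 p (by simp [hp]), h3.2.1⟩⟩

lemma WNF_inv [SuccOrder L] {U : List L} (h : WNF U) (hne : U ≠ []) :
    ∃ γ ps, U = joinSep γ ps ∧ 2 ≤ ps.length ∧ NFP γ ps := by
  cases h with
  | nil => exact absurd rfl hne
  | node α parts hlen hmods hwnf hord => exact ⟨α, parts, rfl, hlen, hmods, hwnf, hord⟩

/-- γ is a member and is the min of a joinSep with ≥ 2 parts -/
lemma joinSep_min {γ : L} {ps : List (List L)} (hlen : 2 ≤ ps.length)
    (hmods : ∀ p ∈ ps, ∀ m ∈ p, γ < m) :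
    γ ∈ joinSep γ ps ∧ ∀ m ∈ joinSep γ ps, γ ≤ m := by
  refine ⟨?_, joinSep_mods hmods⟩
  match ps, hlen with
  | p :: q :: qs, _ =>
      rw [joinSep_cons γ p (by simp)]
      simp

end JoinSep
section Glue
set_option linter.unusedSectionVars false
variable {L : Type} [LinearOrder L]
open Formula

lemma dia_iff {a : L} {φ ψ : Formula L} (h : GLP (φ.iff ψ)) :
    GLP ((Formula.dia a φ).iff (Formula.dia a ψ)) :=
  GLP.iff_intro (GLP.dia_mono (GLP.iff_l h)) (GLP.dia_mono (GLP.iff_r h))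

lemma and_iff {φ φ' ψ ψ' : Formula L} (h1 : GLP (φ.iff φ')) (h2 : GLP (ψ.iff ψ')) :
    GLP ((φ.and ψ).iff (φ'.and ψ')) :=
  GLP.iff_intro (GLP.and_mono (GLP.iff_l h1) (GLP.iff_l h2))
    (GLP.and_mono (GLP.iff_r h1) (GLP.iff_r h2))

/-- pointwise-equivalent part lists give equivalent joined worms -/
lemma js_rep {γ : L} : ∀ {l₁ l₂ : List (List L)},
    (∀ p ∈ l₁, ∀ m ∈ p, γ < m) → (∀ p ∈ l₂, ∀ m ∈ p, γ < m) →
    List.Forall₂ (fun p q => GLP ((worm p).iff (worm q))) l₁ l₂ →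
    GLP ((worm (joinSep γ l₁)).iff (worm (joinSep γ l₂))) := by
  intro l₁ l₂ h1 h2 hf
  induction hf with
  | nil => exact GLP.iff_refl _
  | @cons p q l₁' l₂' hpq htail ih =>
      cases htail with
      | nil => simpa using hpq
      | @cons r s l₁'' l₂'' hrs htail' =>
          rw [joinSep_cons γ p (by simp), joinSep_cons γ q (by simp)]
          have ih' := ih (fun x hx => h1 x (List.mem_cons_of_mem _ hx))
            (fun x hx => h2 x (List.mem_cons_of_mem _ hx))
          have e1 := worm_split_iff (γ := γ) (P := p)
            (h1 p (List.mem_cons_self)) (joinSep γ (r :: l₁''))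
          have e2 := worm_split_iff (γ := γ) (P := q)
            (h2 q (List.mem_cons_self)) (joinSep γ (s :: l₂''))
          exact GLP.iff_trans e1 (GLP.iff_trans (and_iff hpq (dia_iff ih')) (GLP.iff_symm e2))

variable [SuccOrder L]

lemma NFP_tail {γ : L} {p : List L} {ps : List (List L)} (h : NFP γ (p :: ps)) : NFP γ ps :=
  ⟨fun q hq => h.1 q (List.mem_cons_of_mem _ hq),
   fun q hq => h.2.1 q (List.mem_cons_of_mem _ hq), h.2.2.tail⟩

/-- DOM : ⟨succ γ⟩ (last part) → ⟨γ⟩ (whole normal worm) -/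
lemma dom {γ : L} (hγ : γ < Order.succ γ) {u : List L} :
    ∀ (ps : List (List L)), NFP γ (ps ++ [u]) →
    GLP ((Formula.dia (Order.succ γ) (worm u)).imp
         (Formula.dia γ (worm (joinSep γ (ps ++ [u]))))) := by
  intro ps
  induction ps with
  | nil => intro _; simpa using GLP.dia_level (le_of_lt hγ) (worm u)
  | cons p ps' ih =>
      intro h
      have hne : ps' ++ [u] ≠ [] := by simp
      have htl : NFP γ (ps' ++ [u]) := NFP_tail (by simpa using h)
      have ihh := ih htl
      have hpw := chain'_le_pairwise (β := Order.succ γ) (by simpa using h.2.2)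
      have hrel : Le (Order.succ γ) p u := by
        rcases hpw with _ | ⟨hrel, _⟩
        exact hrel u (by simp)
      have hmodp : ∀ m ∈ p, γ < m := h.1 p (by simp)
      set J' := joinSep γ (ps' ++ [u]) with hJ'
      have hjs : joinSep γ ((p :: ps') ++ [u]) = p ++ γ :: J' := by
        rw [List.cons_append, joinSep_cons γ p hne]
      rw [hjs]
      have step1 : GLP ((Formula.dia (Order.succ γ) (worm u)).imp
          ((Formula.dia (Order.succ γ) (worm u)).and (Formula.dia γ (worm J')))) :=
        GLP.imp_and (GLP.imp_id _) ihh
      rcases hrel with hlt | heq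
      · -- worm u → ⟨succ γ⟩ worm p
        have inner : GLP (((worm u).and (Formula.dia γ (worm J'))).imp
            (Formula.dia γ (worm (p ++ γ :: J')))) := by
          have s1 := GLP.and_mono hlt (GLP.imp_id (Formula.dia γ (worm J')))
          have s2 := GLP.dia_merge hγ (worm p) (worm J')
          have s3 := GLP.dia_level (le_of_lt hγ) ((worm p).and (Formula.dia γ (worm J')))
          have s4 := GLP.dia_mono (a := γ) (worm_split_bwd hmodp J')
          exact GLP.imp_trans s1 (GLP.imp_trans s2 (GLP.imp_trans s3 s4))
        have outer := GLP.imp_trans (GLP.dia_merge hγ (worm u) (worm J'))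
          (GLP.imp_trans (GLP.dia_mono inner) (GLP.dia_flatten (le_of_lt hγ) _))
        exact GLP.imp_trans step1 outer
      · -- p = u
        subst heq
        have inner : GLP (((worm p).and (Formula.dia γ (worm J'))).imp
            (worm (p ++ γ :: J'))) := worm_split_bwd hmodp J'
        have outer := GLP.imp_trans (GLP.dia_merge hγ (worm p) (worm J'))
          (GLP.imp_trans (GLP.dia_mono inner) (GLP.dia_level (le_of_lt hγ) _))
        exact GLP.imp_trans step1 outer

/-- CS : a block dominating all the blocks of X pushes below itself the whole of X++T -/
lemma cs {γ : L} (hγ : γ < Order.succ γ) {y : List L} (hy : ∀ m ∈ y, γ ≤ m) :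
    ∀ (X T : List (List L)), T ≠ [] →
    (∀ p ∈ X, ∀ m ∈ p, γ < m) →
    (∀ x ∈ X, GLP ((worm y).imp (Formula.dia (Order.succ γ) (worm x)))) →
    GLP ((worm (y ++ γ :: joinSep γ T)).imp (Formula.dia γ (worm (joinSep γ (X ++ T))))) := by
  intro X
  induction X with
  | nil => intro T hT _ _; simpa using worm_pull hy (joinSep γ T)
  | cons x X' ih =>
      intro T hT hmods hcerts
      have hne : X' ++ T ≠ [] := by
        cases X' <;> simp [hT]
      have hjs : joinSep γ ((x :: X') ++ T) = x ++ γ :: joinSep γ (X' ++ T) := by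
        rw [List.cons_append, joinSep_cons γ x hne]
      rw [hjs]
      have ihh := ih T hT (fun p hp => hmods p (List.mem_cons_of_mem _ hp))
        (fun p hp => hcerts p (List.mem_cons_of_mem _ hp))
      have certx := hcerts x (List.mem_cons_self)
      have s0 : GLP ((worm (y ++ γ :: joinSep γ T)).imp (worm y)) := worm_trunc y _
      have s1 : GLP ((worm (y ++ γ :: joinSep γ T)).imp
          ((Formula.dia (Order.succ γ) (worm x)).and
            (Formula.dia γ (worm (joinSep γ (X' ++ T)))))) :=
        GLP.imp_and (GLP.imp_trans s0 certx) ihh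
      have s2 := GLP.dia_merge hγ (worm x) (worm (joinSep γ (X' ++ T)))
      have s3 := GLP.dia_level (le_of_lt hγ)
        ((worm x).and (Formula.dia γ (worm (joinSep γ (X' ++ T)))))
      have s4 := GLP.dia_mono (a := γ) (worm_split_bwd (hmods x (List.mem_cons_self))
        (joinSep γ (X' ++ T)))
      exact GLP.imp_trans s1 (GLP.imp_trans s2 (GLP.imp_trans s3 s4))

end Glue
section Helpers
set_option linter.unusedSectionVars false
variable {L : Type} [LinearOrder L]
open Formula

/-- trichotomy statement -/
def Tri (β : L) (U V : List L) : Prop :=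
  GLP ((worm U).iff (worm V)) ∨ GLP ((worm U).imp (Formula.dia β (worm V))) ∨
    GLP ((worm V).imp (Formula.dia β (worm U)))

lemma Tri.flip {β : L} {U V : List L} (h : Tri β U V) : Tri β V U := by
  rcases h with h | h | h
  · exact Or.inl (GLP.iff_symm h)
  · exact Or.inr (Or.inr h)
  · exact Or.inr (Or.inl h)

def Oracle [SuccOrder L] (n : ℕ) : Prop :=
  ∀ U V : List L, U.length + V.length < n → WNF U → WNF V →
    ∀ β : L, (∀ m ∈ U, β ≤ m) → (∀ m ∈ V, β ≤ m) → Tri β U V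

lemma glp_of_bot {φ : Formula L} (h : GLP (Formula.bot (L := L))) : GLP φ :=
  GLP.mp' (GLP.efq φ) h

lemma js_trunc_head {γ : L} (p : List L) (ps : List (List L)) :
    GLP ((worm (joinSep γ (p::ps))).imp (worm p)) := by
  cases ps with
  | nil => exact GLP.imp_id _
  | cons q qs => rw [joinSep_cons γ p (by simp)]; exact worm_trunc p _

lemma js_eq_nil {γ : L} {ps : List (List L)} (h : joinSep γ ps = []) :
    ps = [] ∨ ps = [[]] := by
  match ps with
  | [] => exact Or.inl rfl
  | [p] => simp at h; simp [h]
  | p :: q :: qs =>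
      rw [joinSep_cons γ p (by simp)] at h
      exact absurd h (by simp)

lemma js_all_nil {γ : L} : ∀ {ps : List (List L)}, (∀ p ∈ ps, p = []) →
    joinSep γ ps = List.replicate (ps.length - 1) γ := by
  intro ps
  induction ps with
  | nil => intro _; simp
  | cons p ps ih =>
      intro h
      cases ps with
      | nil => simpa using h p (by simp)
      | cons q qs =>
          rw [joinSep_cons γ p (by simp), h p (by simp),
            ih (fun r hr => h r (List.mem_cons_of_mem _ hr))]
          simp [List.replicate_succ]

lemma rep_imp {γ : L} {a b : ℕ} (h : a ≤ b) :
    GLP ((worm (List.replicate b γ)).imp (worm (List.replicate a γ))) := by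
  obtain ⟨c, rfl⟩ : ∃ c, b = a + c := ⟨b - a, by omega⟩
  rw [List.replicate_add]; exact worm_trunc _ _

lemma forall2_equiv_symm {l₁ l₂ : List (List L)}
    (h : List.Forall₂ (fun p q => GLP ((worm p).iff (worm q))) l₁ l₂) :
    List.Forall₂ (fun p q => GLP ((worm p).iff (worm q))) l₂ l₁ := by
  induction h with
  | nil => exact List.Forall₂.nil
  | cons hpq _ ih => exact List.Forall₂.cons (GLP.iff_symm hpq) ih

/-- composition of strict worm facts : A→⟨γ⟩B, B→⟨γ⟩C gives A→⟨γ⟩C -/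
lemma dia_chain {γ : L} {A B C : Formula L} (h1 : GLP (A.imp (Formula.dia γ B)))
    (h2 : GLP (B.imp (Formula.dia γ C))) : GLP (A.imp (Formula.dia γ C)) :=
  GLP.imp_trans h1 (GLP.imp_trans (GLP.dia_mono h2) (GLP.dia_flatten (le_refl γ) _))

lemma length_js_append {γ : L} {ps qs : List (List L)} (hp : ps ≠ []) (hq : qs ≠ []) :
    (joinSep γ (ps++qs)).length = (joinSep γ ps).length + 1 + (joinSep γ qs).length := by
  rw [joinSep_append γ hp hq]; simp; omega

lemma part_len_lt {γ : L} {p : List L} {ps qs : List (List L)} (hp : p ∈ ps) (hq : qs ≠ []) :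
    p.length < (joinSep γ (ps++qs)).length := by
  have h1 : p.length ≤ (joinSep γ ps).length := length_le_joinSep hp
  have hps : ps ≠ [] := by rintro rfl; simp at hp
  rw [length_js_append hps hq]; omega

lemma js_len_pos {γ : L} {qs : List (List L)} (hq : 2 ≤ qs.length) :
    1 ≤ (joinSep γ qs).length := by
  match qs, hq with
  | q :: r :: rs, _ =>
      rw [joinSep_cons γ q (by simp)]
      simp only [List.length_append, List.length_cons]
      omega

lemma js_len_lt {γ : L} {ps qs : List (List L)} (hq : 2 ≤ qs.length) :
    (joinSep γ ps).length < (joinSep γ (ps++qs)).length := by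
  have h1 := js_len_pos (γ := γ) hq
  cases hps : ps with
  | nil => simpa using (show 0 < _ from h1)
  | cons p ps' =>
      rw [← hps, length_js_append (by simp [hps]) (by rintro rfl; simp at hq)]
      omega

end Helpers
section SMDEC
set_option linter.unusedSectionVars false
variable {L : Type} [LinearOrder L] [SuccOrder L]
open Formula

/-- if the last block of X is strictly (at succ γ) above the last block of Y,
then the X-worm is strictly below the Y-worm. -/
lemma last_dom {γ : L} (hγ : γ < Order.succ γ) {X Y : List (List L)}
    (hX : X ≠ []) (hY : Y ≠ []) (nX : NFP γ X) (nY : NFP γ Y)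
    (hc : GLP ((worm (X.getLast hX)).imp
      (Formula.dia (Order.succ γ) (worm (Y.getLast hY))))) :
    GLP ((worm (joinSep γ X)).imp (Formula.dia γ (worm (joinSep γ Y)))) := by
  have nY' : NFP γ (Y.dropLast ++ [Y.getLast hY]) := by
    rw [List.dropLast_append_getLast hY]; exact nY
  have domY := dom hγ Y.dropLast nY'
  rw [List.dropLast_append_getLast hY] at domY
  have inner : GLP ((worm (X.getLast hX)).imp (Formula.dia γ (worm (joinSep γ Y)))) :=
    GLP.imp_trans hc domY
  by_cases hXd : X.dropLast = []
  · have : X = [X.getLast hX] := by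
      conv_lhs => rw [← List.dropLast_append_getLast hX]
      rw [hXd]; rfl
    rw [this]; simpa using inner
  · have hsplit : joinSep γ X = joinSep γ X.dropLast ++ γ :: X.getLast hX := by
      conv_lhs => rw [← List.dropLast_append_getLast hX]
      rw [joinSep_append γ hXd (by simp)]; rfl
    rw [hsplit]
    have hmods : ∀ m ∈ joinSep γ X.dropLast, γ ≤ m := by
      apply joinSep_mods
      intro p hp m hm
      exact nX.1 p (by rw [← List.dropLast_append_getLast hX]; simp [hp]) m hm
    exact GLP.imp_trans (worm_pull hmods _)
      (GLP.imp_trans (GLP.dia_mono inner) (GLP.dia_flatten (le_refl γ) _))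

/-- the big simultaneous induction : strict-transfer (SM) and
equivalence-transfer (DEC) along common (pointwise equivalent) tails. -/
lemma smdec {γ : L} (hγ : γ < Order.succ γ) {n : ℕ} (or : Oracle (L := L) n) :
    ∀ (k : ℕ) (X Y T₁ T₂ : List (List L)),
      X.length + Y.length ≤ k →
      T₁ ≠ [] → T₂ ≠ [] →
      NFP γ (X ++ T₁) → NFP γ (Y ++ T₂) →
      List.Forall₂ (fun p q => GLP ((worm p).iff (worm q))) T₁ T₂ →
      (joinSep γ (X ++ T₁)).length + (joinSep γ (Y ++ T₂)).length ≤ n →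
      ((GLP ((worm (joinSep γ Y)).imp (Formula.dia γ (worm (joinSep γ X)))) →
        GLP ((worm (joinSep γ (Y ++ T₂))).imp (Formula.dia γ (worm (joinSep γ (X ++ T₁)))))) ∧
       ((X = [] ↔ Y = []) → GLP ((worm (joinSep γ X)).iff (worm (joinSep γ Y))) →
        GLP ((worm (joinSep γ (X ++ T₁))).iff (worm (joinSep γ (Y ++ T₂)))))) := by
  intro k
  induction k using Nat.strong_induction_on with
  | _ k IH =>
  intro X Y T₁ T₂ hk hT₁ hT₂ nX nY hF hn
  have hT₁pos : 0 < T₁.length := List.length_pos_iff.2 hT₁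
  have hT₂pos : 0 < T₂.length := List.length_pos_iff.2 hT₂
  -- basic mods facts
  have mX : ∀ p ∈ X ++ T₁, ∀ m ∈ p, γ < m := nX.1
  have mY : ∀ p ∈ Y ++ T₂, ∀ m ∈ p, γ < m := nY.1
  have mT₁ : ∀ p ∈ T₁, ∀ m ∈ p, γ < m := fun p hp => mX p (by simp [hp])
  have mT₂ : ∀ p ∈ T₂, ∀ m ∈ p, γ < m := fun p hp => mY p (by simp [hp])
  have jse : GLP ((worm (joinSep γ T₂)).iff (worm (joinSep γ T₁))) :=
    js_rep mT₂ mT₁ (forall2_equiv_symm hF)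
  constructor
  -- ==================== SM part ====================
  · intro H
    by_cases hY : Y = []
    · subst hY
      simp only [joinSep_nil] at H
      have hbot := GLP.dia_collapse (GLP.mp' H GLP.top_prov)
      exact glp_of_bot hbot
    · -- Y ≠ []
      have eqY : joinSep γ (Y ++ T₂) = joinSep γ Y ++ γ :: joinSep γ T₂ :=
        joinSep_append γ hY hT₂
      have truncY : GLP ((worm (joinSep γ (Y ++ T₂))).imp (worm (joinSep γ Y))) := by
        rw [eqY]; exact worm_trunc _ _
      by_cases hX : X = []
      · subst hX
        have w1 : GLP ((worm (joinSep γ (Y ++ T₂))).imp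
            (Formula.dia γ (worm (joinSep γ T₂)))) := by
          rw [eqY]
          exact worm_pull (joinSep_mods (fun p hp => mY p (by simp [hp]))) _
        simpa using GLP.imp_trans w1 (GLP.dia_mono (GLP.iff_l jse))
      · -- both X, Y nonempty
        obtain ⟨xv, hxv⟩ : ∃ t, t = X.getLast hX := ⟨_, rfl⟩
        obtain ⟨yv, hyv⟩ : ∃ t, t = Y.getLast hY := ⟨_, rfl⟩
        have hXd : X.dropLast ++ [xv] = X := by rw [hxv]; exact List.dropLast_append_getLast hX
        have hYd : Y.dropLast ++ [yv] = Y := by rw [hyv]; exact List.dropLast_append_getLast hY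
        have hxmem : xv ∈ X := by rw [← hXd]; simp
        have hymem : yv ∈ Y := by rw [← hYd]; simp
        have nXp : NFP γ X := (NFP_sub nX).1
        have nYp : NFP γ Y := (NFP_sub nY).1
        have wx : WNF xv := nXp.2.1 xv hxmem
        have wy : WNF yv := nYp.2.1 yv hymem
        have mxv : ∀ m ∈ xv, γ < m := nXp.1 xv hxmem
        have myv : ∀ m ∈ yv, γ < m := nYp.1 yv hymem
        have hszx : xv.length < (joinSep γ (X ++ T₁)).length := part_len_lt (by simp [hxmem]) hT₁
        have hszy : yv.length < (joinSep γ (Y ++ T₂)).length := part_len_lt (by simp [hymem]) hT₂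
        have tri0 := or xv yv (by omega) wx wy (Order.succ γ)
          (fun m hm => Order.succ_le_of_lt (mxv m hm))
          (fun m hm => Order.succ_le_of_lt (myv m hm))
        rcases tri0 with hc | hc | hc
        · -- xv ≡ yv : recurse on prefixes
          -- rewriting facts
          have hXT : X ++ T₁ = X.dropLast ++ (xv :: T₁) := by
            conv_lhs => rw [← hXd]
            rw [List.append_assoc]; rfl
          have hYT : Y ++ T₂ = Y.dropLast ++ (yv :: T₂) := by
            conv_lhs => rw [← hYd]
            rw [List.append_assoc]; rfl
          have nX' : NFP γ (X.dropLast ++ (xv :: T₁)) := by rw [← hXT]; exact nX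
          have nY' : NFP γ (Y.dropLast ++ (yv :: T₂)) := by rw [← hYT]; exact nY
          have szpX : (joinSep γ X.dropLast).length < (joinSep γ (X ++ T₁)).length := by
            rw [hXT]; exact js_len_lt (by simp only [List.length_cons]; omega)
          have szpY : (joinSep γ Y.dropLast).length < (joinSep γ (Y ++ T₂)).length := by
            rw [hYT]; exact js_len_lt (by simp only [List.length_cons]; omega)
          have wjX' : WNF (joinSep γ X.dropLast) := NFP_wnf (NFP_sub nX').1
          have wjY' : WNF (joinSep γ Y.dropLast) := NFP_wnf (NFP_sub nY').1
          have tri2 := or (joinSep γ X.dropLast) (joinSep γ Y.dropLast) (by omega) wjX' wjY' γ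
            (joinSep_mods (fun p hp m hm => (NFP_sub nX').1.1 p (by simp [hp]) m hm))
            (joinSep_mods (fun p hp m hm => (NFP_sub nY').1.1 p (by simp [hp]) m hm))
          have hkX : X.dropLast.length + Y.dropLast.length < k := by
            have h1 : X.length = X.dropLast.length + 1 := by
              conv_lhs => rw [← hXd]
              simp
            have h2 : Y.length = Y.dropLast.length + 1 := by
              conv_lhs => rw [← hYd]
              simp
            omega
          rcases tri2 with he | hst | hst
          · -- prefixes equivalent
            by_cases hX' : X.dropLast = []
            · by_cases hY' : Y.dropLast = []
              · -- X = [xv], Y = [yv] : H is absurd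
                have eX : joinSep γ X = xv := by rw [← hXd, hX']; rfl
                have eY : joinSep γ Y = yv := by rw [← hYd, hY']; rfl
                have H' : GLP ((worm yv).imp (Formula.dia γ (worm yv))) := by
                  rw [eX, eY] at H
                  exact GLP.imp_trans H (GLP.dia_mono (GLP.iff_l hc))
                have hneg : GLP (worm (joinSep γ Y)).neg := by
                  rw [eY]; exact GLP.lob_collapse H'
                exact GLP.imp_trans truncY (GLP.neg_imp_of_prov_neg hneg)
              · -- X⁻ = [], Y⁻ ≠ []
                cases hjs : joinSep γ Y.dropLast with
                | nil =>
                    -- Y.dropLast = [[]]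
                    have hYD : Y.dropLast = [[]] := by
                      rcases js_eq_nil hjs with h | h
                      · exact absurd h hY'
                      · exact h
                    -- strict conclusion directly
                    have eY2 : joinSep γ (Y ++ T₂) = γ :: (yv ++ γ :: joinSep γ T₂) := by
                      rw [hYT, hYD]
                      rw [show ([[]] : List (List L)) ++ (yv :: T₂) = [] :: yv :: T₂ from rfl]
                      rw [joinSep_cons γ [] (by simp), joinSep_cons γ yv hT₂]
                      rfl
                    have eX2 : joinSep γ (X ++ T₁) = xv ++ γ :: joinSep γ T₁ := by
                      rw [hXT, hX']
                      simp only [List.nil_append]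
                      exact joinSep_cons γ xv hT₁
                    rw [eY2, eX2]
                    have inner : GLP ((worm (yv ++ γ :: joinSep γ T₂)).imp
                        (worm (xv ++ γ :: joinSep γ T₁))) := by
                      have s1 := worm_split_fwd (fun m hm => le_of_lt (myv m hm)) (joinSep γ T₂)
                      have s2 := GLP.and_mono (GLP.iff_r hc) (GLP.dia_mono (a := γ) (GLP.iff_l jse))
                      have s3 := worm_split_bwd mxv (joinSep γ T₁)
                      exact GLP.imp_trans s1 (GLP.imp_trans s2 s3)
                    exact GLP.dia_mono inner
                | cons m rest =>
                    have hX'' : joinSep γ X.dropLast = [] := by rw [hX']; rfl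
                    rw [hX'', hjs] at he
                    have hprov : GLP (worm (m :: rest)) := GLP.mp' (GLP.iff_l he) GLP.top_prov
                    exact glp_of_bot (GLP.dia_collapse hprov)
            · by_cases hY' : Y.dropLast = []
              · -- X⁻ ≠ [], Y⁻ = [] : absurdity via H
                cases hjs : joinSep γ X.dropLast with
                | nil =>
                    have hXD : X.dropLast = [[]] := by
                      rcases js_eq_nil hjs with h | h
                      · exact absurd h hX'
                      · exact h
                    have eX2 : joinSep γ X = γ :: xv := by
                      rw [← hXd, hXD]
                      rw [show ([[]] : List (List L)) ++ [xv] = [] :: [xv] from rfl]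
                      rw [joinSep_cons γ [] (by simp)]; rfl
                    have eY2 : joinSep γ Y = yv := by rw [← hYd, hY']; rfl
                    rw [eX2, eY2] at H
                    -- H : worm yv → ⟨γ⟩⟨γ⟩ worm xv
                    have H' : GLP ((worm yv).imp (Formula.dia γ (worm yv))) := by
                      have i1 : GLP ((worm (γ :: xv)).imp (Formula.dia γ (worm yv))) :=
                        GLP.dia_mono (GLP.iff_l hc)
                      exact GLP.imp_trans H (GLP.imp_trans (GLP.dia_mono i1)
                        (GLP.dia_flatten (le_refl γ) _))
                    have hneg : GLP (worm (joinSep γ Y)).neg := by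
                      rw [eY2]; exact GLP.lob_collapse H'
                    exact GLP.imp_trans truncY (GLP.neg_imp_of_prov_neg hneg)
                | cons m rest =>
                    have hY'' : joinSep γ Y.dropLast = [] := by rw [hY']; rfl
                    rw [hY'', hjs] at he
                    have hprov : GLP (worm (m :: rest)) := GLP.mp' (GLP.iff_r he) GLP.top_prov
                    exact glp_of_bot (GLP.dia_collapse hprov)
              · -- both prefixes nonempty : DEC recursion to refute H
                have hd := (IH (X.dropLast.length + Y.dropLast.length) hkX
                  X.dropLast Y.dropLast [xv] [yv] le_rfl (by simp) (by simp)
                  (by rw [hXd]; exact nXp) (by rw [hYd]; exact nYp)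
                  (List.Forall₂.cons hc List.Forall₂.nil) ?_).2 ?_ he
                · rw [hXd, hYd] at hd
                  have hneg : GLP (worm (joinSep γ Y)).neg :=
                    GLP.lob_collapse (GLP.imp_trans H (GLP.dia_mono (GLP.iff_l hd)))
                  exact GLP.imp_trans truncY (GLP.neg_imp_of_prov_neg hneg)
                · rw [hXd, hYd]
                  have e1 : (joinSep γ X).length ≤ (joinSep γ (X ++ T₁)).length := by
                    rw [joinSep_append γ hX hT₁]; simp only [List.length_append, List.length_cons]; omega
                  have e2 : (joinSep γ Y).length ≤ (joinSep γ (Y ++ T₂)).length := by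
                    rw [joinSep_append γ hY hT₂]; simp only [List.length_append, List.length_cons]; omega
                  omega
                · exact iff_of_false hX' hY'
          · -- hst : worm jsX⁻ → ⟨γ⟩ worm jsY⁻ : "Y⁻ < X⁻" , refute H
            have r := (IH (Y.dropLast.length + X.dropLast.length) (by omega)
              Y.dropLast X.dropLast [yv] [xv] le_rfl (by simp) (by simp)
              (by rw [hYd]; exact nYp) (by rw [hXd]; exact nXp)
              (List.Forall₂.cons (GLP.iff_symm hc) List.Forall₂.nil) ?_).1 hst
            · rw [hXd, hYd] at r
              have hneg : GLP (worm (joinSep γ Y)).neg :=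
                GLP.lob_collapse (dia_chain H r)
              exact GLP.imp_trans truncY (GLP.neg_imp_of_prov_neg hneg)
            · rw [hXd, hYd]
              have e1 : (joinSep γ X).length ≤ (joinSep γ (X ++ T₁)).length := by
                rw [joinSep_append γ hX hT₁]; simp only [List.length_append, List.length_cons]; omega
              have e2 : (joinSep γ Y).length ≤ (joinSep γ (Y ++ T₂)).length := by
                rw [joinSep_append γ hY hT₂]; simp only [List.length_append, List.length_cons]; omega
              omega
          · -- hst : worm jsY⁻ → ⟨γ⟩ worm jsX⁻ : main SM recursion
            have r := (IH (X.dropLast.length + Y.dropLast.length) hkX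
              X.dropLast Y.dropLast (xv :: T₁) (yv :: T₂) le_rfl (by simp) (by simp)
              (by rw [← hXT]; exact nX) (by rw [← hYT]; exact nY)
              (List.Forall₂.cons hc hF) (by rw [← hXT, ← hYT]; exact hn)).1 hst
            rw [← hXT, ← hYT] at r
            exact r
        · -- hc : worm xv → ⟨succ γ⟩ worm yv : "yv < xv" : absurd case
          have s1 : GLP ((worm (joinSep γ X)).imp (Formula.dia γ (worm (joinSep γ Y)))) :=
            last_dom hγ hX hY nXp nYp (by rw [← hxv, ← hyv]; exact hc)
          have hneg : GLP (worm (joinSep γ Y)).neg := GLP.lob_collapse (dia_chain H s1)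
          exact GLP.imp_trans truncY (GLP.neg_imp_of_prov_neg hneg)
        · -- hc : worm yv → ⟨succ γ⟩ worm xv : "xv < yv" : CS case
          -- certificates for all blocks of X
          have certs : ∀ x' ∈ X, GLP ((worm yv).imp
              (Formula.dia (Order.succ γ) (worm x'))) := by
            intro x' hx'
            have hx'' : x' ∈ X.dropLast ++ [xv] := by rw [hXd]; exact hx'
            rcases List.mem_append.1 hx'' with h1 | h2
            · have hle := chain'_le_last nXp.2.2 hX (p := x') h1
              rw [← hxv] at hle
              rcases hle with hlt | heq
              · exact GLP.imp_trans hc (GLP.imp_trans (GLP.dia_mono hlt)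
                  (GLP.dia_flatten (le_refl _) _))
              · rw [heq]; exact hc
            · rw [List.mem_singleton.1 h2]; exact hc
          have csr := cs hγ (fun m hm => le_of_lt (myv m hm)) X T₁ hT₁
            (fun p hp => mX p (by simp [hp])) certs
          have ct : GLP ((worm (yv ++ γ :: joinSep γ T₂)).imp
              (worm (yv ++ γ :: joinSep γ T₁))) := by
            rw [worm_append yv (γ :: joinSep γ T₂), worm_append yv (γ :: joinSep γ T₁)]
            exact dias_mono yv (GLP.dia_mono (GLP.iff_l jse))
          have csy := GLP.imp_trans ct csr
          by_cases hY' : Y.dropLast = []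
          · have eY2 : joinSep γ (Y ++ T₂) = yv ++ γ :: joinSep γ T₂ := by
              conv_lhs => rw [← hYd, hY']
              simp only [List.nil_append, List.singleton_append]
              exact joinSep_cons γ yv hT₂
            rw [eY2]; exact csy
          · have eY2 : joinSep γ (Y ++ T₂) = joinSep γ Y.dropLast ++ γ ::
                (yv ++ γ :: joinSep γ T₂) := by
              conv_lhs => rw [← hYd]
              rw [List.append_assoc, List.singleton_append,
                joinSep_append γ hY' (by simp), joinSep_cons γ yv hT₂]
            rw [eY2]
            have hmods : ∀ m ∈ joinSep γ Y.dropLast, γ ≤ m := by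
              apply joinSep_mods
              intro p hp m hm
              exact nYp.1 p (by rw [← hYd]; simp [hp]) m hm
            exact GLP.imp_trans (worm_pull hmods _)
              (GLP.imp_trans (GLP.dia_mono csy) (GLP.dia_flatten (le_refl γ) _))
  -- ==================== DEC part ====================
  · intro hnil Heq
    by_cases hX : X = []
    · have hY : Y = [] := hnil.1 hX
      subst hX; subst hY
      simpa using GLP.iff_symm jse
    · have hY : Y ≠ [] := fun h => hX (hnil.2 h)
      have eqX : joinSep γ (X ++ T₁) = joinSep γ X ++ γ :: joinSep γ T₁ :=
        joinSep_append γ hX hT₁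
      have eqY : joinSep γ (Y ++ T₂) = joinSep γ Y ++ γ :: joinSep γ T₂ :=
        joinSep_append γ hY hT₂
      have truncX : GLP ((worm (joinSep γ (X ++ T₁))).imp (worm (joinSep γ X))) := by
        rw [eqX]; exact worm_trunc _ _
      have truncY : GLP ((worm (joinSep γ (Y ++ T₂))).imp (worm (joinSep γ Y))) := by
        rw [eqY]; exact worm_trunc _ _
      obtain ⟨xv, hxv⟩ : ∃ t, t = X.getLast hX := ⟨_, rfl⟩
      obtain ⟨yv, hyv⟩ : ∃ t, t = Y.getLast hY := ⟨_, rfl⟩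
      have hXd : X.dropLast ++ [xv] = X := by rw [hxv]; exact List.dropLast_append_getLast hX
      have hYd : Y.dropLast ++ [yv] = Y := by rw [hyv]; exact List.dropLast_append_getLast hY
      have hxmem : xv ∈ X := by rw [← hXd]; simp
      have hymem : yv ∈ Y := by rw [← hYd]; simp
      have nXp : NFP γ X := (NFP_sub nX).1
      have nYp : NFP γ Y := (NFP_sub nY).1
      have wx : WNF xv := nXp.2.1 xv hxmem
      have wy : WNF yv := nYp.2.1 yv hymem
      have mxv : ∀ m ∈ xv, γ < m := nXp.1 xv hxmem
      have myv : ∀ m ∈ yv, γ < m := nYp.1 yv hymem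
      have hszx : xv.length < (joinSep γ (X ++ T₁)).length := part_len_lt (by simp [hxmem]) hT₁
      have hszy : yv.length < (joinSep γ (Y ++ T₂)).length := part_len_lt (by simp [hymem]) hT₂
      -- vacuous conclusion helper
      have vac : GLP (worm (joinSep γ X)).neg →
          GLP ((worm (joinSep γ (X ++ T₁))).iff (worm (joinSep γ (Y ++ T₂)))) := by
        intro hnegX
        have hnegY : GLP (worm (joinSep γ Y)).neg :=
          GLP.imp_trans (GLP.iff_r Heq) hnegX
        exact GLP.iff_intro
          (GLP.imp_trans truncX (GLP.neg_imp_of_prov_neg hnegX))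
          (GLP.imp_trans truncY (GLP.neg_imp_of_prov_neg hnegY))
      have tri0 := or xv yv (by omega) wx wy (Order.succ γ)
        (fun m hm => Order.succ_le_of_lt (mxv m hm))
        (fun m hm => Order.succ_le_of_lt (myv m hm))
      rcases tri0 with hc | hc | hc
      · -- xv ≡ yv
        have hXT : X ++ T₁ = X.dropLast ++ (xv :: T₁) := by
          conv_lhs => rw [← hXd]
          rw [List.append_assoc]; rfl
        have hYT : Y ++ T₂ = Y.dropLast ++ (yv :: T₂) := by
          conv_lhs => rw [← hYd]
          rw [List.append_assoc]; rfl
        have nX' : NFP γ (X.dropLast ++ (xv :: T₁)) := by rw [← hXT]; exact nX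
        have nY' : NFP γ (Y.dropLast ++ (yv :: T₂)) := by rw [← hYT]; exact nY
        have szpX : (joinSep γ X.dropLast).length < (joinSep γ (X ++ T₁)).length := by
          rw [hXT]; exact js_len_lt (by simp only [List.length_cons]; omega)
        have szpY : (joinSep γ Y.dropLast).length < (joinSep γ (Y ++ T₂)).length := by
          rw [hYT]; exact js_len_lt (by simp only [List.length_cons]; omega)
        have wjX' : WNF (joinSep γ X.dropLast) := NFP_wnf (NFP_sub nX').1
        have wjY' : WNF (joinSep γ Y.dropLast) := NFP_wnf (NFP_sub nY').1
        have hkX : X.dropLast.length + Y.dropLast.length < k := by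
          have h1 : X.length = X.dropLast.length + 1 := by
            conv_lhs => rw [← hXd]
            simp
          have h2 : Y.length = Y.dropLast.length + 1 := by
            conv_lhs => rw [← hYd]
            simp
          omega
        have szjs : (joinSep γ X).length + (joinSep γ Y).length ≤ n := by
          have e1 : (joinSep γ X).length ≤ (joinSep γ (X ++ T₁)).length := by
            rw [eqX]; simp only [List.length_append, List.length_cons]; omega
          have e2 : (joinSep γ Y).length ≤ (joinSep γ (Y ++ T₂)).length := by
            rw [eqY]; simp only [List.length_append, List.length_cons]; omega
          omega
        have tri2 := or (joinSep γ X.dropLast) (joinSep γ Y.dropLast) (by omega) wjX' wjY' γ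
          (joinSep_mods (fun p hp m hm => (NFP_sub nX').1.1 p (by simp [hp]) m hm))
          (joinSep_mods (fun p hp m hm => (NFP_sub nY').1.1 p (by simp [hp]) m hm))
        rcases tri2 with he | hst | hst
        · -- prefixes equivalent
          by_cases hX' : X.dropLast = []
          · by_cases hY' : Y.dropLast = []
            · -- X=[xv], Y=[yv] : direct equivalence
              have eX2 : joinSep γ (X ++ T₁) = xv ++ γ :: joinSep γ T₁ := by
                rw [hXT, hX']
                simp only [List.nil_append]
                exact joinSep_cons γ xv hT₁
              have eY2 : joinSep γ (Y ++ T₂) = yv ++ γ :: joinSep γ T₂ := by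
                rw [hYT, hY']
                simp only [List.nil_append]
                exact joinSep_cons γ yv hT₂
              rw [eX2, eY2]
              exact GLP.iff_trans (worm_split_iff mxv _)
                (GLP.iff_trans (and_iff hc (dia_iff (GLP.iff_symm jse)))
                  (GLP.iff_symm (worm_split_iff myv _)))
            · -- X⁻ = [] , Y⁻ ≠ []
              cases hjs : joinSep γ Y.dropLast with
              | nil =>
                  have hYD : Y.dropLast = [[]] := by
                    rcases js_eq_nil hjs with h | h
                    · exact absurd h hY'
                    · exact h
                  -- Heq is absurd : worm X = xv , worm Y = ⟨γ⟩ yv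
                  have eX2 : joinSep γ X = xv := by rw [← hXd, hX']; rfl
                  have eY2 : joinSep γ Y = γ :: yv := by
                    rw [← hYd, hYD]
                    rw [show ([[]] : List (List L)) ++ [yv] = [] :: [yv] from rfl]
                    rw [joinSep_cons γ [] (by simp)]; rfl
                  apply vac
                  rw [eX2]
                  apply GLP.lob_collapse
                  have h1 : GLP ((worm xv).imp (Formula.dia γ (worm yv))) := by
                    have := GLP.iff_l Heq
                    rw [eX2, eY2] at this
                    exact this
                  exact GLP.imp_trans h1 (GLP.dia_mono (GLP.iff_r hc))
              | cons m rest =>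
                  have hX'' : joinSep γ X.dropLast = [] := by rw [hX']; rfl
                  rw [hX'', hjs] at he
                  have hprov : GLP (worm (m :: rest)) := GLP.mp' (GLP.iff_l he) GLP.top_prov
                  have hbot := GLP.dia_collapse hprov
                  exact GLP.iff_intro (glp_of_bot hbot) (glp_of_bot hbot)
          · by_cases hY' : Y.dropLast = []
            · -- X⁻ ≠ [] , Y⁻ = []
              cases hjs : joinSep γ X.dropLast with
              | nil =>
                  have hXD : X.dropLast = [[]] := by
                    rcases js_eq_nil hjs with h | h
                    · exact absurd h hX'
                    · exact h
                  have eX2 : joinSep γ X = γ :: xv := by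
                    rw [← hXd, hXD]
                    rw [show ([[]] : List (List L)) ++ [xv] = [] :: [xv] from rfl]
                    rw [joinSep_cons γ [] (by simp)]; rfl
                  have eY2 : joinSep γ Y = yv := by rw [← hYd, hY']; rfl
                  -- Heq : ⟨γ⟩ xv ≡ yv : absurd
                  have h1 : GLP ((worm yv).imp (Formula.dia γ (worm yv))) := by
                    have := GLP.iff_r Heq
                    rw [eX2, eY2] at this
                    exact GLP.imp_trans this (GLP.dia_mono (GLP.iff_l hc))
                  have hnegY : GLP (worm (joinSep γ Y)).neg := by
                    rw [eY2]; exact GLP.lob_collapse h1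
                  apply vac
                  exact GLP.imp_trans (GLP.iff_l Heq) hnegY
              | cons m rest =>
                  have hY'' : joinSep γ Y.dropLast = [] := by rw [hY']; rfl
                  rw [hY'', hjs] at he
                  have hprov : GLP (worm (m :: rest)) := GLP.mp' (GLP.iff_r he) GLP.top_prov
                  have hbot := GLP.dia_collapse hprov
                  exact GLP.iff_intro (glp_of_bot hbot) (glp_of_bot hbot)
            · -- both nonempty : DEC recursion
              have hd := (IH (X.dropLast.length + Y.dropLast.length) hkX
                X.dropLast Y.dropLast (xv :: T₁) (yv :: T₂) le_rfl (by simp) (by simp)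
                (by rw [← hXT]; exact nX) (by rw [← hYT]; exact nY)
                (List.Forall₂.cons hc hF) (by rw [← hXT, ← hYT]; exact hn)).2
                (iff_of_false hX' hY') he
              rw [← hXT, ← hYT] at hd
              exact hd
        · -- hst : worm jsX⁻ → ⟨γ⟩ worm jsY⁻ : refute
          have r := (IH (Y.dropLast.length + X.dropLast.length) (by omega)
            Y.dropLast X.dropLast [yv] [xv] le_rfl (by simp) (by simp)
            (by rw [hYd]; exact nYp) (by rw [hXd]; exact nXp)
            (List.Forall₂.cons (GLP.iff_symm hc) List.Forall₂.nil)
            (by rw [hXd, hYd]; omega)).1 hst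
          rw [hXd, hYd] at r
          -- r : worm jsX → ⟨γ⟩ worm jsY
          apply vac
          exact GLP.lob_collapse (GLP.imp_trans r (GLP.dia_mono (GLP.iff_r Heq)))
        · -- hst : worm jsY⁻ → ⟨γ⟩ worm jsX⁻ : refute
          have r := (IH (X.dropLast.length + Y.dropLast.length) hkX
            X.dropLast Y.dropLast [xv] [yv] le_rfl (by simp) (by simp)
            (by rw [hXd]; exact nXp) (by rw [hYd]; exact nYp)
            (List.Forall₂.cons hc List.Forall₂.nil)
            (by rw [hXd, hYd]; omega)).1 hst
          rw [hXd, hYd] at r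
          -- r : worm jsY → ⟨γ⟩ worm jsX
          apply vac
          exact GLP.lob_collapse (GLP.imp_trans (GLP.iff_l Heq) r)
      · -- hc : worm xv → ⟨succ γ⟩ worm yv : absurd
        have s1 : GLP ((worm (joinSep γ X)).imp (Formula.dia γ (worm (joinSep γ Y)))) :=
          last_dom hγ hX hY nXp nYp (by rw [← hxv, ← hyv]; exact hc)
        apply vac
        exact GLP.lob_collapse (GLP.imp_trans s1 (GLP.dia_mono (GLP.iff_r Heq)))
      · -- hc : worm yv → ⟨succ γ⟩ worm xv : absurd
        have s1 : GLP ((worm (joinSep γ Y)).imp (Formula.dia γ (worm (joinSep γ X)))) :=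
          last_dom hγ hY hX nYp nXp (by rw [← hxv, ← hyv]; exact hc)
        have hnegY : GLP (worm (joinSep γ Y)).neg :=
          GLP.lob_collapse (GLP.imp_trans s1 (GLP.dia_mono (GLP.iff_l Heq)))
        apply vac
        exact GLP.imp_trans (GLP.iff_l Heq) hnegY
end SMDEC
section COMP
set_option linter.unusedSectionVars false
variable {L : Type} [LinearOrder L] [SuccOrder L]
open Formula

/-- the case of two normal forms with the same minimal modality -/
lemma comp_eq {γ : L} {ps qs : List (List L)} (hlenp : 2 ≤ ps.length) (hlenq : 2 ≤ qs.length)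
    (nps : NFP γ ps) (nqs : NFP γ qs) {n : ℕ} (or : Oracle (L := L) n)
    (hsz : (joinSep γ ps).length + (joinSep γ qs).length ≤ n)
    {β : L} (hβ : β ≤ γ) : Tri β (joinSep γ ps) (joinSep γ qs) := by
  have hps : ps ≠ [] := by rintro rfl; simp at hlenp
  have hqs : qs ≠ [] := by rintro rfl; simp at hlenq
  by_cases hγ : γ < Order.succ γ
  case neg =>
    -- γ is maximal : all parts are empty
    have hmax : IsMax γ := by
      by_contra hm
      exact hγ (Order.lt_succ_of_not_isMax hm)
    have hallp : ∀ p ∈ ps, p = [] := by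
      intro p hp
      cases hp2 : p with
      | nil => rfl
      | cons m rest =>
          have := nps.1 p hp m (by rw [hp2]; simp)
          exact absurd (hmax (le_of_lt this)) (not_le_of_gt this)
    have hallq : ∀ p ∈ qs, p = [] := by
      intro p hp
      cases hp2 : p with
      | nil => rfl
      | cons m rest =>
          have := nqs.1 p hp m (by rw [hp2]; simp)
          exact absurd (hmax (le_of_lt this)) (not_le_of_gt this)
    rw [js_all_nil hallp, js_all_nil hallq]
    rcases Nat.lt_trichotomy (ps.length - 1) (qs.length - 1) with h | h | h
    · refine Or.inr (Or.inr ?_)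
      have : qs.length - 1 = (qs.length - 2) + 1 := by omega
      rw [this, List.replicate_succ]
      exact GLP.imp_trans (GLP.dia_mono (rep_imp (by omega))) (GLP.dia_level hβ _)
    · rw [h]; exact Or.inl (GLP.iff_refl _)
    · refine Or.inr (Or.inl ?_)
      have : ps.length - 1 = (ps.length - 2) + 1 := by omega
      rw [this, List.replicate_succ]
      exact GLP.imp_trans (GLP.dia_mono (rep_imp (by omega))) (GLP.dia_level hβ _)
  case pos =>
    obtain ⟨u, hu⟩ : ∃ t, t = ps.getLast hps := ⟨_, rfl⟩
    obtain ⟨v, hv⟩ : ∃ t, t = qs.getLast hqs := ⟨_, rfl⟩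
    have hpd : ps.dropLast ++ [u] = ps := by rw [hu]; exact List.dropLast_append_getLast hps
    have hqd : qs.dropLast ++ [v] = qs := by rw [hv]; exact List.dropLast_append_getLast hqs
    have hpd' : ps.dropLast ≠ [] := by
      intro h
      rw [← hpd, h] at hlenp; simp at hlenp
    have hqd' : qs.dropLast ≠ [] := by
      intro h
      rw [← hqd, h] at hlenq; simp at hlenq
    have humem : u ∈ ps := by rw [← hpd]; simp
    have hvmem : v ∈ qs := by rw [← hqd]; simp
    have lenU : (joinSep γ ps).length =
        (joinSep γ ps.dropLast).length + 1 + u.length := by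
      conv_lhs => rw [← hpd]
      rw [joinSep_append γ hpd' (by simp)]
      simp only [List.length_append, List.length_cons, joinSep_single]
      omega
    have lenV : (joinSep γ qs).length =
        (joinSep γ qs.dropLast).length + 1 + v.length := by
      conv_lhs => rw [← hqd]
      rw [joinSep_append γ hqd' (by simp)]
      simp only [List.length_append, List.length_cons, joinSep_single]
      omega
    have wu : WNF u := nps.2.1 u humem
    have wv : WNF v := nqs.2.1 v hvmem
    have mu : ∀ m ∈ u, γ < m := nps.1 u humem
    have mv : ∀ m ∈ v, γ < m := nqs.1 v hvmem
    have tri0 := or u v (by omega) wu wv (Order.succ γ)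
      (fun m hm => Order.succ_le_of_lt (mu m hm))
      (fun m hm => Order.succ_le_of_lt (mv m hm))
    rcases tri0 with hc | hc | hc
    · -- u ≡ v : compare prefixes
      have wjp : WNF (joinSep γ ps.dropLast) := by
        apply NFP_wnf
        have := NFP_sub (ps := ps.dropLast) (qs := [u]) (by rw [hpd]; exact nps)
        exact this.1
      have wjq : WNF (joinSep γ qs.dropLast) := by
        apply NFP_wnf
        have := NFP_sub (ps := qs.dropLast) (qs := [v]) (by rw [hqd]; exact nqs)
        exact this.1
      have tri2 := or (joinSep γ ps.dropLast) (joinSep γ qs.dropLast) (by omega) wjp wjq γ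
        (joinSep_mods (fun p hp m hm => nps.1 p (by rw [← hpd]; simp [hp]) m hm))
        (joinSep_mods (fun p hp m hm => nqs.1 p (by rw [← hqd]; simp [hp]) m hm))
      rcases tri2 with he | hst | hst
      · -- DEC
        have hd := (smdec hγ or (ps.dropLast.length + qs.dropLast.length)
          ps.dropLast qs.dropLast [u] [v] le_rfl (by simp) (by simp)
          (by rw [hpd]; exact nps) (by rw [hqd]; exact nqs)
          (List.Forall₂.cons hc List.Forall₂.nil)
          (by rw [hpd, hqd]; exact hsz)).2 (iff_of_false hpd' hqd') he
        rw [hpd, hqd] at hd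
        exact Or.inl hd
      · -- hst : worm jsps⁻ → ⟨γ⟩ worm jsqs⁻ : "qs⁻ < ps⁻" : V < U
        have r := (smdec hγ or (qs.dropLast.length + ps.dropLast.length)
          qs.dropLast ps.dropLast [v] [u] le_rfl (by simp) (by simp)
          (by rw [hqd]; exact nqs) (by rw [hpd]; exact nps)
          (List.Forall₂.cons (GLP.iff_symm hc) List.Forall₂.nil)
          (by rw [hpd, hqd]; omega)).1 hst
        rw [hpd, hqd] at r
        exact Or.inr (Or.inl (GLP.imp_trans r (GLP.dia_level hβ _)))
      · -- hst : worm jsqs⁻ → ⟨γ⟩ worm jsps⁻ : U < V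
        have r := (smdec hγ or (ps.dropLast.length + qs.dropLast.length)
          ps.dropLast qs.dropLast [u] [v] le_rfl (by simp) (by simp)
          (by rw [hpd]; exact nps) (by rw [hqd]; exact nqs)
          (List.Forall₂.cons hc List.Forall₂.nil)
          (by rw [hpd, hqd]; omega)).1 hst
        rw [hpd, hqd] at r
        exact Or.inr (Or.inr (GLP.imp_trans r (GLP.dia_level hβ _)))
    · -- worm u → ⟨succ γ⟩ worm v : "v < u" : V < U
      have s := last_dom hγ hps hqs nps nqs (by rw [← hu, ← hv]; exact hc)
      exact Or.inr (Or.inl (GLP.imp_trans s (GLP.dia_level hβ _)))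
    · -- worm v → ⟨succ γ⟩ worm u : U < V
      have s := last_dom hγ hqs hps nqs nps (by rw [← hu, ← hv]; exact hc)
      exact Or.inr (Or.inr (GLP.imp_trans s (GLP.dia_level hβ _)))

/-- the case γ < δ -/
lemma comp_lt {γ δ : L} (hγδ : γ < δ) {ps qs : List (List L)}
    (hlenp : 2 ≤ ps.length) (hlenq : 2 ≤ qs.length)
    (nps : NFP γ ps) (nqs : NFP δ qs) {n : ℕ} (or : Oracle (L := L) n)
    (hsz : (joinSep γ ps).length + (joinSep δ qs).length ≤ n)
    {β : L} (hβ : β ≤ γ) : Tri β (joinSep γ ps) (joinSep δ qs) := by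
  have hγ : γ < Order.succ γ := Order.lt_succ_of_not_isMax (fun h => absurd (h (le_of_lt hγδ)) (not_le_of_gt hγδ))
  obtain ⟨p₁, ps', rfl⟩ : ∃ a l, ps = a :: l := by
    match ps, hlenp with
    | a :: l, _ => exact ⟨a, l, rfl⟩
  have hps' : ps' ≠ [] := by rintro rfl; simp at hlenp
  have eqU : joinSep γ (p₁ :: ps') = p₁ ++ γ :: joinSep γ ps' := joinSep_cons γ p₁ hps'
  have mV : ∀ m ∈ joinSep δ qs, γ < m := by
    intro m hm
    rcases mem_joinSep hm with rfl | ⟨p, hp, hmp⟩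
    · exact hγδ
    · exact lt_trans hγδ (nqs.1 p hp m hmp)
  have wV : WNF (joinSep δ qs) := NFP_wnf nqs
  have mp₁ : ∀ m ∈ p₁, γ < m := nps.1 p₁ (by simp)
  have wp₁ : WNF p₁ := nps.2.1 p₁ (by simp)
  have nps' : NFP γ ps' := NFP_tail nps
  have wU' : WNF (joinSep γ ps') := NFP_wnf nps'
  have mU' : ∀ m ∈ joinSep γ ps', γ ≤ m :=
    joinSep_mods (fun p hp m hm => nps'.1 p hp m hm)
  have lenU : (joinSep γ (p₁ :: ps')).length = p₁.length + 1 + (joinSep γ ps').length := by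
    rw [eqU]; simp only [List.length_append, List.length_cons]; omega
  -- U decomposition facts
  have splitU := worm_split_iff mp₁ (joinSep γ ps')
  have truncU : GLP ((worm (joinSep γ (p₁ :: ps'))).imp (worm p₁)) := js_trunc_head p₁ ps'
  have pullU : GLP ((worm (joinSep γ (p₁ :: ps'))).imp
      (Formula.dia γ (worm (joinSep γ ps')))) := by
    rw [eqU]; exact worm_pull (fun m hm => le_of_lt (mp₁ m hm)) _
  have tri1 := or p₁ (joinSep δ qs) (by omega) wp₁ wV (Order.succ γ)
    (fun m hm => Order.succ_le_of_lt (mp₁ m hm))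
    (fun m hm => Order.succ_le_of_lt (mV m hm))
  have tri2 := or (joinSep γ ps') (joinSep δ qs) (by omega) wU' wV γ
    mU' (fun m hm => le_of_lt (mV m hm))
  rcases tri1 with hc | hc | hc
  · -- p₁ ≡ V
    rcases tri2 with he | hst | hst
    · -- U' ≡ V  : then V < U
      refine Or.inr (Or.inl ?_)
      exact GLP.imp_trans pullU (GLP.imp_trans (GLP.dia_mono (GLP.iff_l he)) (GLP.dia_level hβ _))
    · -- hst : worm U' → ⟨γ⟩ worm V : "V < U'" : V < U
      refine Or.inr (Or.inl ?_)
      exact GLP.imp_trans (dia_chain pullU hst) (GLP.dia_level hβ _)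
    · -- hst : worm V → ⟨γ⟩ worm U' : "U' < V"  : use the chain link of U
      refine Or.inr (Or.inl ?_)
      obtain ⟨p₂, ps'', rfl⟩ : ∃ a l, ps' = a :: l := by
        match ps', hps' with
        | a :: l, _ => exact ⟨a, l, rfl⟩
      have hlink : Le (Order.succ γ) p₁ p₂ := by
        have := nps.2.2
        obtain ⟨hrel, _⟩ := List.isChain_cons_cons.1 this
        exact hrel
      have truncU' : GLP ((worm (joinSep γ (p₂ :: ps''))).imp (worm p₂)) :=
        js_trunc_head p₂ ps''
      rcases hlink with hlt | heqq
      · -- worm p₂ → ⟨succ γ⟩ worm p₁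
        have s1 : GLP ((worm (joinSep γ (p₂ :: ps''))).imp
            (Formula.dia γ (worm p₁))) :=
          GLP.imp_trans truncU' (GLP.imp_trans hlt (GLP.dia_level (Order.le_succ γ) _))
        exact GLP.imp_trans (dia_chain pullU s1)
          (GLP.imp_trans (GLP.dia_mono (GLP.iff_l hc)) (GLP.dia_level hβ _))
      · have s1 : GLP ((worm (joinSep γ (p₂ :: ps''))).imp (worm (joinSep δ qs))) :=
          GLP.imp_trans truncU' (by rw [← heqq]; exact GLP.iff_l hc)
        exact GLP.imp_trans pullU
          (GLP.imp_trans (GLP.dia_mono s1) (GLP.dia_level hβ _))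
  · -- hc : worm p₁ → ⟨succ γ⟩ worm V : "V < p₁" : V < U
    refine Or.inr (Or.inl ?_)
    exact GLP.imp_trans truncU (GLP.imp_trans hc (GLP.dia_level (le_trans hβ (Order.le_succ γ)) _))
  · -- hc : worm V → ⟨succ γ⟩ worm p₁ : "p₁ < V"
    rcases tri2 with he | hst | hst
    · -- U' ≡ V : V < U
      refine Or.inr (Or.inl ?_)
      exact GLP.imp_trans pullU (GLP.imp_trans (GLP.dia_mono (GLP.iff_l he)) (GLP.dia_level hβ _))
    · -- worm U' → ⟨γ⟩ worm V : V < U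
      refine Or.inr (Or.inl ?_)
      exact GLP.imp_trans (dia_chain pullU hst) (GLP.dia_level hβ _)
    · -- worm V → ⟨γ⟩ worm U' : U < V
      refine Or.inr (Or.inr ?_)
      have s1 : GLP ((worm (joinSep δ qs)).imp
          (((Formula.dia (Order.succ γ) (worm p₁))).and
            (Formula.dia γ (worm (joinSep γ ps'))))) := GLP.imp_and hc hst
      have s2 := GLP.dia_merge hγ (worm p₁) (worm (joinSep γ ps'))
      have s3 := GLP.dia_level (le_trans hβ (Order.le_succ γ))
        ((worm p₁).and (Formula.dia γ (worm (joinSep γ ps'))))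
      have s4 : GLP ((((worm p₁).and (Formula.dia γ (worm (joinSep γ ps'))))).imp
          (worm (joinSep γ (p₁ :: ps')))) := by
        rw [eqU]; exact worm_split_bwd mp₁ _
      exact GLP.imp_trans s1 (GLP.imp_trans s2 (GLP.imp_trans s3 (GLP.dia_mono s4)))

/-- full trichotomy -/
theorem comp_all : ∀ n : ℕ, Oracle (L := L) n := by
  intro n
  induction n using Nat.strong_induction_on with
  | _ n IH =>
  intro U V hUV hU hV β hbU hbV
  have or : Oracle (L := L) (U.length + V.length) := by
    intro U' V' h' hU' hV' β' h1 h2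
    exact IH (U.length + V.length) hUV U' V' h' hU' hV' β' h1 h2
  by_cases hUe : U = []
  · subst hUe
    by_cases hVe : V = []
    · subst hVe; exact Or.inl (GLP.iff_refl _)
    · obtain ⟨v, V', rfl⟩ : ∃ a l, V = a :: l := by
        match V, hVe with
        | a :: l, _ => exact ⟨a, l, rfl⟩
      exact Or.inr (Or.inr (worm_head_dia_top (hbV v (by simp)) V'))
  · by_cases hVe : V = []
    · subst hVe
      obtain ⟨uu, UU, rfl⟩ : ∃ a l, U = a :: l := by
        match U, hUe with
        | a :: l, _ => exact ⟨a, l, rfl⟩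
      exact Or.inr (Or.inl (worm_head_dia_top (hbU uu (by simp)) UU))
    · obtain ⟨γ, ps, hUeq, hlenp, nps⟩ := WNF_inv hU hUe
      obtain ⟨δ, qs, hVeq, hlenq, nqs⟩ := WNF_inv hV hVe
      subst hUeq; subst hVeq
      have hβγ : β ≤ γ := hbU γ (joinSep_min hlenp nps.1).1
      have hβδ : β ≤ δ := hbV δ (joinSep_min hlenq nqs.1).1
      rcases lt_trichotomy γ δ with hlt | heq | hlt
      · exact comp_lt hlt hlenp hlenq nps nqs or le_rfl hβγ
      · subst heq
        exact comp_eq hlenp hlenq nps nqs or le_rfl hβγ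
      · exact (comp_lt hlt hlenq hlenp nqs nps or (by omega) hβδ).flip

theorem comp_final (U V : List L) (hU : WNF U) (hV : WNF V) (β : L)
    (h1 : ∀ m ∈ U, β ≤ m) (h2 : ∀ m ∈ V, β ≤ m) : Tri β U V :=
  comp_all (U.length + V.length + 1) U V (by omega) hU hV β h1 h2

end COMP
section Main
set_option linter.unusedSectionVars false
variable {L : Type} [LinearOrder L] [SuccOrder L]
open Formula

lemma mem_joinSep_of_part {γ : L} {ps : List (List L)} {p : List L} {m : L}
    (hp : p ∈ ps) (hm : m ∈ p) : m ∈ joinSep γ ps := by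
  induction ps with
  | nil => simp at hp
  | cons q qs ih =>
      cases qs with
      | nil =>
          rw [List.mem_singleton] at hp; subst hp; simpa using hm
      | cons r rs =>
          rw [joinSep_cons γ q (by simp)]
          rcases List.mem_cons.1 hp with rfl | h2
          · exact List.mem_append.2 (Or.inl hm)
          · exact List.mem_append.2 (Or.inr (List.mem_cons_of_mem _ (ih h2)))

lemma wnf_single (γ : L) : WNF [γ] := by
  have h := WNF.node γ [[], []] (by simp) (by simp) (by simp [WNF.nil])
    (by constructor <;> simp [Le])
  simpa [joinSep] using h

lemma merge {γ : L} {H : List L} (wH : WNF H) (mH : ∀ m ∈ H, γ < m) :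
    ∀ (qs : List (List L)), NFP γ qs →
    ∃ B, WNF B ∧ GLP (((worm H).and (Formula.dia γ (worm (joinSep γ qs)))).iff (worm B)) ∧
      ∀ m ∈ B, m = γ ∨ m ∈ H ∨ ∃ p ∈ qs, m ∈ p := by
  intro qs
  induction qs with
  | nil =>
      intro _
      by_cases hH : H = []
      · subst hH
        refine ⟨[γ], wnf_single γ, ?_, by simp⟩
        exact GLP.iff_intro (GLP.and_right _ _) (GLP.imp_and (GLP.imp_top _) (GLP.imp_id _))
      · refine ⟨H, wH, ?_, by intro m hm; simp [hm]⟩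
        obtain ⟨mm, H', rfl⟩ : ∃ a l, H = a :: l := by
          match H, hH with
          | a :: l, _ => exact ⟨a, l, rfl⟩
        exact GLP.iff_intro (GLP.and_left _ _)
          (GLP.imp_and (GLP.imp_id _)
            (worm_head_dia_top (le_of_lt (mH mm (by simp))) H'))
  | cons q qs' ih =>
      intro nqs
      have wq : WNF q := nqs.2.1 q (by simp)
      have mq : ∀ m ∈ q, γ < m := nqs.1 q (by simp)
      have tri := comp_final H q wH wq (Order.succ γ)
        (fun m hm => Order.succ_le_of_lt (mH m hm))
        (fun m hm => Order.succ_le_of_lt (mq m hm))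
      have eqQ : joinSep γ (q :: q :: qs') = q ++ γ :: joinSep γ (q :: qs') :=
        joinSep_cons γ q (by simp)
      rcases tri with he | hst | hst
      · -- H ≡ q : take q :: q :: qs'
        refine ⟨joinSep γ (q :: q :: qs'), ?_, ?_, ?_⟩
        · refine WNF.node γ (q :: q :: qs') (by simp only [List.length_cons]; omega)
            ?_ ?_ ?_
          · intro p hp
            rcases List.mem_cons.1 hp with rfl | hp2
            · exact mq
            · exact nqs.1 p hp2
          · intro p hp
            rcases List.mem_cons.1 hp with rfl | hp2
            · exact wq
            · exact nqs.2.1 p hp2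
          · simp only [List.Chain', List.isChain_cons_cons]
            exact ⟨Or.inr rfl, nqs.2.2⟩
        · rw [eqQ]
          exact GLP.iff_trans (and_iff he (GLP.iff_refl _))
            (GLP.iff_symm (worm_split_iff mq _))
        · intro m hm
          rcases mem_joinSep hm with rfl | ⟨p, hp, hmp⟩
          · exact Or.inl rfl
          · rcases List.mem_cons.1 hp with rfl | hp2
            · exact Or.inr (Or.inr ⟨p, by simp, hmp⟩)
            · exact Or.inr (Or.inr ⟨p, hp2, hmp⟩)
      · -- worm H → ⟨succ γ⟩ worm q : "q < H" : absorb q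
        by_cases hγ : γ < Order.succ γ
        · -- absorption equivalence
          have absb : GLP (((worm H).and (Formula.dia γ (worm (joinSep γ (q :: qs'))))).iff
              ((worm H).and (Formula.dia γ (worm (joinSep γ qs'))))) := by
            cases hqs' : qs' with
            | nil =>
                refine GLP.iff_intro ?_ ?_
                · exact GLP.and_mono (GLP.imp_id _) (GLP.dia_mono (GLP.imp_top _))
                · refine GLP.imp_and (GLP.and_left _ _) ?_
                  exact GLP.imp_trans (GLP.and_left _ _)
                    (GLP.imp_trans hst (GLP.dia_level (Order.le_succ γ) _))
            | cons r rs =>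
                have hne : qs' ≠ [] := by rw [hqs']; simp
                rw [← hqs']
                have eqq : joinSep γ (q :: qs') = q ++ γ :: joinSep γ qs' :=
                  joinSep_cons γ q hne
                refine GLP.iff_intro ?_ ?_
                · refine GLP.and_mono (GLP.imp_id _) ?_
                  rw [eqq]
                  exact GLP.imp_trans
                    (GLP.dia_mono (worm_pull (fun m hm => le_of_lt (mq m hm)) _))
                    (GLP.dia_flatten (le_refl γ) _)
                · refine GLP.imp_and (GLP.and_left _ _) ?_
                  have s1 := GLP.and_mono hst
                    (GLP.imp_id (Formula.dia γ (worm (joinSep γ qs'))))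
                  have s2 := GLP.dia_merge hγ (worm q) (worm (joinSep γ qs'))
                  have s3 := GLP.dia_level (le_of_lt hγ)
                    ((worm q).and (Formula.dia γ (worm (joinSep γ qs'))))
                  have s4 : GLP ((((worm q).and (Formula.dia γ (worm (joinSep γ qs'))))).imp
                      (worm (joinSep γ (q :: qs')))) := by
                    rw [eqq]; exact worm_split_bwd mq _
                  exact GLP.imp_trans s1 (GLP.imp_trans s2 (GLP.imp_trans s3 (GLP.dia_mono s4)))
          obtain ⟨B, wB, hB, hBm⟩ := ih (NFP_tail nqs)
          refine ⟨B, wB, GLP.iff_trans absb hB, ?_⟩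
          intro m hm
          rcases hBm m hm with h | h | ⟨p, hp, hmp⟩
          · exact Or.inl h
          · exact Or.inr (Or.inl h)
          · exact Or.inr (Or.inr ⟨p, List.mem_cons_of_mem _ hp, hmp⟩)
        · -- γ maximal : H = q = [] and hst is absurd
          have hmax : IsMax γ := by
            by_contra hm
            exact hγ (Order.lt_succ_of_not_isMax hm)
          have hH : H = [] := by
            cases hHe : H with
            | nil => rfl
            | cons m rest =>
                have := mH m (by rw [hHe]; simp)
                exact absurd (hmax (le_of_lt this)) (not_le_of_gt this)
          have hq : q = [] := by
            cases hqe : q with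
            | nil => rfl
            | cons m rest =>
                have := mq m (by rw [hqe]; simp)
                exact absurd (hmax (le_of_lt this)) (not_le_of_gt this)
          have hbot : GLP (Formula.bot (L := L)) := by
            apply GLP.dia_collapse (a := Order.succ γ) (φ := worm q)
            apply GLP.mp' hst
            rw [hH]
            exact GLP.top_prov
          exact ⟨[γ], wnf_single γ,
            GLP.iff_intro (glp_of_bot hbot) (glp_of_bot hbot), by simp⟩

      · -- worm q → ⟨succ γ⟩ worm H  : "H < q" : prepend H
        refine ⟨joinSep γ (H :: q :: qs'), ?_, ?_, ?_⟩
        · refine WNF.node γ (H :: q :: qs') (by simp only [List.length_cons]; omega)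
            ?_ ?_ ?_
          · intro p hp
            rcases List.mem_cons.1 hp with rfl | hp2
            · exact mH
            · exact nqs.1 p hp2
          · intro p hp
            rcases List.mem_cons.1 hp with rfl | hp2
            · exact wH
            · exact nqs.2.1 p hp2
          · simp only [List.Chain', List.isChain_cons_cons]
            exact ⟨Or.inl hst, nqs.2.2⟩
        · rw [joinSep_cons γ H (by simp)]
          exact GLP.iff_symm (worm_split_iff mH _)
        · intro m hm
          rcases mem_joinSep hm with rfl | ⟨p, hp, hmp⟩
          · exact Or.inl rfl
          · rcases List.mem_cons.1 hp with rfl | hp2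
            · exact Or.inr (Or.inl hmp)
            · exact Or.inr (Or.inr ⟨p, hp2, hmp⟩)
lemma exists_min : ∀ (A : List L), A ≠ [] → ∃ γ, γ ∈ A ∧ ∀ m ∈ A, γ ≤ m := by
  intro A
  induction A with
  | nil => intro h; exact absurd rfl h
  | cons a rest ih =>
      intro _
      cases hr : rest with
      | nil => exact ⟨a, by simp, by simp⟩
      | cons b l =>
          obtain ⟨γ, hγm, hγle⟩ := ih (by rw [hr]; simp)
          rw [← hr] at *
          rcases le_total a γ with h | h
          · exact ⟨a, by simp, by
              intro m hm
              rcases List.mem_cons.1 hm with rfl | hm2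
              · exact le_refl _
              · exact le_trans h (hγle m hm2)⟩
          · exact ⟨γ, List.mem_cons_of_mem _ hγm, by
              intro m hm
              rcases List.mem_cons.1 hm with rfl | hm2
              · exact h
              · exact hγle m hm2⟩

lemma exists_split {γ : L} : ∀ (A : List L), γ ∈ A → (∀ m ∈ A, γ ≤ m) →
    ∃ h t, A = h ++ γ :: t ∧ ∀ m ∈ h, γ < m := by
  intro A
  induction A with
  | nil => intro h; simp at h
  | cons a rest ih =>
      intro hmem hle
      by_cases ha : a = γ
      · subst ha
        exact ⟨[], rest, rfl, by simp⟩
      · have hmem' : γ ∈ rest := by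
          rcases List.mem_cons.1 hmem with h | h
          · exact absurd h.symm ha
          · exact h
        obtain ⟨h, t, heq, hh⟩ := ih hmem' (fun m hm => hle m (List.mem_cons_of_mem _ hm))
        refine ⟨a :: h, t, by rw [heq]; rfl, ?_⟩
        intro m hm
        rcases List.mem_cons.1 hm with rfl | hm2
        · exact lt_of_le_of_ne (hle m (by simp)) (fun he => ha he.symm)
        · exact hh m hm2

theorem exists_WNF_aux : ∀ (n : ℕ) (A : List L), A.length ≤ n →
    ∃ B : List L, WNF B ∧ GLP ((worm A).iff (worm B)) ∧ ∀ β ∈ B, β ∈ A := by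
  intro n
  induction n using Nat.strong_induction_on with
  | _ n IH =>
  intro A hA
  by_cases hAe : A = []
  · subst hAe
    exact ⟨[], WNF.nil, GLP.iff_refl _, by simp⟩
  · obtain ⟨γ, hγm, hγle⟩ := exists_min A hAe
    obtain ⟨h, t, rfl, hh⟩ := exists_split A hγm hγle
    have hlh : h.length < n := by
      have : (h ++ γ :: t).length = h.length + 1 + t.length := by simp; omega
      omega
    have hlt : t.length < n := by
      have : (h ++ γ :: t).length = h.length + 1 + t.length := by simp; omega
      omega
    obtain ⟨Bh, wBh, eBh, mBh⟩ := IH h.length hlh h le_rfl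
    obtain ⟨Bt, wBt, eBt, mBt⟩ := IH t.length hlt t le_rfl
    have mBh' : ∀ m ∈ Bh, γ < m := fun m hm => hh m (mBh m hm)
    -- realize Bt as a γ-parts list
    have hqs : ∃ qs : List (List L), NFP γ qs ∧ joinSep γ qs = Bt := by
      by_cases hBte : Bt = []
      · exact ⟨[], ⟨by simp, by simp, List.isChain_nil⟩, by simp [hBte]⟩
      · obtain ⟨δ, rs, hBteq, hlenr, nrs⟩ := WNF_inv wBt hBte
        have hγδ : γ ≤ δ := by
          apply hγle
          have : δ ∈ Bt := by rw [hBteq]; exact (joinSep_min hlenr nrs.1).1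
          exact List.mem_append.2 (Or.inr (List.mem_cons_of_mem _ (mBt δ this)))
        rcases lt_or_eq_of_le hγδ with hlt2 | heq2
        · refine ⟨[Bt], ⟨?_, ?_, ?_⟩, by simp⟩
          · intro p hp m hm
            rw [List.mem_singleton] at hp; subst hp
            rw [hBteq] at hm
            rcases mem_joinSep hm with rfl | ⟨p', hp', hmp'⟩
            · exact hlt2
            · exact lt_trans hlt2 (nrs.1 p' hp' m hmp')
          · intro p hp; rw [List.mem_singleton] at hp; subst hp; exact wBt
          · exact List.isChain_singleton _
        · subst heq2
          exact ⟨rs, nrs, hBteq.symm⟩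
    obtain ⟨qs, nqs, hqseq⟩ := hqs
    obtain ⟨B, wB, eB, mB⟩ := merge wBh mBh' qs nqs
    refine ⟨B, wB, ?_, ?_⟩
    · -- worm (h ++ γ :: t) ≡ worm B
      have e1 : GLP ((worm (h ++ γ :: t)).iff ((worm h).and (Formula.dia γ (worm t)))) :=
        worm_split_iff hh t
      have e2 : GLP (((worm h).and (Formula.dia γ (worm t))).iff
          ((worm Bh).and (Formula.dia γ (worm Bt)))) :=
        and_iff eBh (dia_iff eBt)
      have e3 : GLP (((worm Bh).and (Formula.dia γ (worm Bt))).iff (worm B)) := by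
        rw [← hqseq] at *
        exact eB
      exact GLP.iff_trans e1 (GLP.iff_trans e2 e3)
    · intro m hm
      rcases mB m hm with rfl | hmh | ⟨p, hp, hmp⟩
      · exact List.mem_append.2 (Or.inr (by simp))
      · exact List.mem_append.2 (Or.inl (mBh m hmh))
      · have : m ∈ Bt := by
          rw [← hqseq]
          exact mem_joinSep_of_part hp hmp
        exact List.mem_append.2 (Or.inr (List.mem_cons_of_mem _ (mBt m this)))

end Main

/-- Every worm is `GLP`-equivalent to a worm in worm normal form whose
modalities are among those of the original worm. -/
theorem exists_WNF {L : Type} [LinearOrder L] [SuccOrder L] (A : List L) :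
    ∃ B : List L, WNF B ∧ GLP ((worm A).iff (worm B)) ∧ ∀ β ∈ B, β ∈ A :=
  exists_WNF_aux A.length A le_rfl
end

section
/- Assume irreflexivity of the orderings <_α on worms. Let A, A₁, …, A_I be worms with all modalities ≥ α such that for each i, GLP_Λ does not prove A → A_i. Then GLP_Λ proves (A ∧ (A₁ ∨ ⋯ ∨ A_I)) → ⟨α⟩A. -/
open Formula

def disjWorms {L : Type} (l : List (List L)) : Formula L :=
  (l.map worm).foldr Formula.or Formula.bot

namespace GLPAux

open Formula

variable {L : Type} [LinearOrder L]

/-- Derivability from a finite context over GLP. -/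
inductive Der (Γ : List (Formula L)) : Formula L → Prop
  | ax {φ : Formula L} : GLP φ → Der Γ φ
  | hyp {φ : Formula L} : φ ∈ Γ → Der Γ φ
  | mp {φ ψ : Formula L} : Der Γ (φ.imp ψ) → Der Γ φ → Der Γ ψ

theorem GLP.imp_refl (φ : Formula L) : GLP (φ.imp φ) :=
  GLP.mp _ _ (GLP.mp _ _ (GLP.k2 φ (φ.imp φ) φ) (GLP.k1 φ (φ.imp φ))) (GLP.k1 φ φ)

theorem Der.weaken {Γ Δ : List (Formula L)} {φ : Formula L} (h : ∀ x ∈ Γ, x ∈ Δ) :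
    Der Γ φ → Der Δ φ := by
  intro d
  induction d with
  | ax g => exact Der.ax g
  | hyp m => exact Der.hyp (h _ m)
  | mp _ _ ih1 ih2 => exact Der.mp ih1 ih2

theorem deduction {Γ : List (Formula L)} {φ ψ : Formula L} (d : Der (φ :: Γ) ψ) :
    Der Γ (φ.imp ψ) := by
  induction d with
  | @ax χ g => exact Der.mp (Der.ax (GLP.k1 χ φ)) (Der.ax g)
  | @hyp χ m =>
    rcases List.mem_cons.1 m with h | h
    · subst h; exact Der.ax (GLP.imp_refl _)
    · exact Der.mp (Der.ax (GLP.k1 χ φ)) (Der.hyp h)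
  | @mp χ ρ _ _ ih1 ih2 =>
    exact Der.mp (Der.mp (Der.ax (GLP.k2 φ χ ρ)) ih1) ih2

theorem glp_of_der {φ : Formula L} (d : Der [] φ) : GLP φ := by
  induction d with
  | ax g => exact g
  | hyp m => simp at m
  | mp _ _ ih1 ih2 => exact GLP.mp _ _ ih1 ih2

theorem Der.hyp0 {Γ : List (Formula L)} {φ : Formula L} : Der (φ :: Γ) φ := Der.hyp (by simp)
theorem Der.hyp1 {Γ : List (Formula L)} {φ ψ : Formula L} : Der (ψ :: φ :: Γ) φ := Der.hyp (by simp)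
theorem Der.hyp2 {Γ : List (Formula L)} {φ ψ χ : Formula L} : Der (χ :: ψ :: φ :: Γ) φ := Der.hyp (by simp)
theorem Der.push {Γ : List (Formula L)} {φ ψ : Formula L} (d : Der Γ ψ) : Der (φ :: Γ) ψ :=
  d.weaken (by intro x h; simp [h])

/-- ex falso in context -/
theorem Der.efq {Γ : List (Formula L)} {φ : Formula L} (d : Der Γ Formula.bot) : Der Γ φ := by
  have h1 : Der Γ (φ.neg.imp Formula.bot.neg) := deduction (deduction Der.hyp0)
  exact Der.mp (Der.mp (Der.ax (GLP.k3 φ Formula.bot)) h1) d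

/-- double negation elimination in context -/
theorem Der.dne {Γ : List (Formula L)} {φ : Formula L} (d : Der Γ φ.neg.neg) : Der Γ φ := by
  have h1 : Der Γ (φ.neg.imp φ.neg.neg.neg) := by
    apply deduction; apply deduction
    exact Der.mp Der.hyp0 Der.hyp1
  exact Der.mp (Der.mp (Der.ax (GLP.k3 φ φ.neg.neg)) h1) d

theorem Der.byContra {Γ : List (Formula L)} {φ : Formula L} (d : Der (φ.neg :: Γ) Formula.bot) :
    Der Γ φ := Der.dne (deduction d)

theorem Der.andI {Γ : List (Formula L)} {φ ψ : Formula L} (d1 : Der Γ φ) (d2 : Der Γ ψ) :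
    Der Γ (φ.and ψ) :=
  deduction (Der.mp (Der.mp Der.hyp0 d1.push) d2.push)

theorem Der.andE1 {Γ : List (Formula L)} {φ ψ : Formula L} (d : Der Γ (φ.and ψ)) : Der Γ φ := by
  apply Der.byContra
  have h : Der (φ.neg :: Γ) (φ.imp ψ.neg) :=
    deduction (Der.efq (Der.mp Der.hyp1 Der.hyp0))
  exact Der.mp d.push h

theorem Der.andE2 {Γ : List (Formula L)} {φ ψ : Formula L} (d : Der Γ (φ.and ψ)) : Der Γ ψ := by
  apply Der.byContra
  have h : Der (ψ.neg :: Γ) (φ.imp ψ.neg) := deduction Der.hyp1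
  exact Der.mp d.push h

theorem Der.orI1 {Γ : List (Formula L)} {φ ψ : Formula L} (d : Der Γ φ) : Der Γ (φ.or ψ) :=
  deduction (Der.efq (Der.mp Der.hyp0 d.push))

theorem Der.orI2 {Γ : List (Formula L)} {φ ψ : Formula L} (d : Der Γ ψ) : Der Γ (φ.or ψ) :=
  deduction d.push

theorem Der.orE {Γ : List (Formula L)} {φ ψ χ : Formula L} (d : Der Γ (φ.or ψ))
    (dφ : Der (φ :: Γ) χ) (dψ : Der (ψ :: Γ) χ) : Der Γ χ := by
  apply Der.byContra
  have nφ : Der (χ.neg :: Γ) φ.neg := by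
    apply deduction
    exact Der.mp Der.hyp1 (Der.mp ((deduction dφ).push.push) Der.hyp0)
  have hψ : Der (χ.neg :: Γ) ψ := Der.mp d.push nφ
  exact Der.mp Der.hyp0 (Der.mp ((deduction dψ).push) hψ)

end GLPAux
namespace GLPAux

open Formula

variable {L : Type} [LinearOrder L]

-- GLP-level propositional combinators

theorem GLP.comp {φ ψ χ : Formula L} (h1 : GLP (φ.imp ψ)) (h2 : GLP (ψ.imp χ)) :
    GLP (φ.imp χ) := by
  apply glp_of_der; apply deduction
  exact Der.mp (Der.ax h2) (Der.mp (Der.ax h1) Der.hyp0)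

theorem GLP.and_left (φ ψ : Formula L) : GLP ((φ.and ψ).imp φ) :=
  glp_of_der (deduction (Der.andE1 Der.hyp0))

theorem GLP.and_right (φ ψ : Formula L) : GLP ((φ.and ψ).imp ψ) :=
  glp_of_der (deduction (Der.andE2 Der.hyp0))

theorem GLP.imp_and {χ φ ψ : Formula L} (h1 : GLP (χ.imp φ)) (h2 : GLP (χ.imp ψ)) :
    GLP (χ.imp (φ.and ψ)) := by
  apply glp_of_der; apply deduction
  exact Der.andI (Der.mp (Der.ax h1) Der.hyp0) (Der.mp (Der.ax h2) Der.hyp0)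

theorem GLP.imp_top (φ : Formula L) : GLP (φ.imp Formula.top) :=
  glp_of_der (deduction (deduction Der.hyp0))

theorem GLP.bot_imp (φ : Formula L) : GLP (Formula.bot.imp φ) :=
  glp_of_der (deduction (Der.efq Der.hyp0))

theorem GLP.contrapose {φ ψ : Formula L} (h : GLP (φ.imp ψ)) :
    GLP (ψ.neg.imp φ.neg) := by
  apply glp_of_der; apply deduction; apply deduction
  exact Der.mp Der.hyp1 (Der.mp (Der.ax h) Der.hyp0)

theorem GLP.dni (φ : Formula L) : GLP (φ.imp φ.neg.neg) :=
  glp_of_der (deduction (deduction (Der.mp Der.hyp0 Der.hyp1)))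

theorem GLP.dne' (φ : Formula L) : GLP (φ.neg.neg.imp φ) :=
  glp_of_der (deduction (Der.dne Der.hyp0))

theorem GLP.or_imp {φ ψ χ : Formula L} (h1 : GLP (φ.imp χ)) (h2 : GLP (ψ.imp χ)) :
    GLP ((φ.or ψ).imp χ) := by
  apply glp_of_der; apply deduction
  exact Der.orE Der.hyp0 (Der.mp (Der.ax h1) Der.hyp0) (Der.mp (Der.ax h2) Der.hyp0)

/-- from (χ∧φ)→ρ and (χ∧ψ)→ρ conclude (χ∧(φ∨ψ))→ρ -/
theorem GLP.and_or_elim {χ φ ψ ρ : Formula L} (h1 : GLP ((χ.and φ).imp ρ))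
    (h2 : GLP ((χ.and ψ).imp ρ)) : GLP ((χ.and (φ.or ψ)).imp ρ) := by
  apply glp_of_der; apply deduction
  apply Der.orE (Der.andE2 Der.hyp0)
  · exact Der.mp (Der.ax h1) (Der.andI (Der.andE1 Der.hyp1) Der.hyp0)
  · exact Der.mp (Der.ax h2) (Der.andI (Der.andE1 Der.hyp1) Der.hyp0)

-- Modal lemmas

theorem GLP.box_mono_rule {φ ψ : Formula L} (α : L) (h : GLP (φ.imp ψ)) :
    GLP ((Formula.box α φ).imp (Formula.box α ψ)) :=
  GLP.mp _ _ (GLP.dist α φ ψ) (GLP.nec α _ h)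

theorem GLP.dia_mono_rule {φ ψ : Formula L} (α : L) (h : GLP (φ.imp ψ)) :
    GLP ((dia α φ).imp (dia α ψ)) :=
  GLP.contrapose (GLP.box_mono_rule α (GLP.contrapose h))

theorem GLP.dia_le {α β : L} (φ : Formula L) (h : α ≤ β) :
    GLP ((dia β φ).imp (dia α φ)) :=
  GLP.contrapose (GLP.mono α β φ.neg h)

/-- ◇a ◇γ φ → ◇γ φ  for γ ≤ a -/
theorem GLP.dia_outer_absorb {γ a : L} (φ : Formula L) (h : γ ≤ a) :
    GLP ((dia a (dia γ φ)).imp (dia γ φ)) := by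
  have h1 : GLP (((dia γ φ).neg).imp (Formula.box a ((dia γ φ).neg))) := by
    have d1 : GLP (((dia γ φ).neg).imp (Formula.box γ φ.neg)) := GLP.dne' _
    have d2 : GLP ((Formula.box γ φ.neg).imp (Formula.box a (Formula.box γ φ.neg))) :=
      GLP.trans γ a φ.neg h
    have d3 : GLP ((Formula.box a (Formula.box γ φ.neg)).imp
        (Formula.box a ((dia γ φ).neg))) := GLP.box_mono_rule a (GLP.dni _)
    exact GLP.comp (GLP.comp d1 d2) d3
  exact GLP.comp (GLP.contrapose h1) (GLP.dne' _)

theorem GLP.dia_dia {γ : L} (φ : Formula L) :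
    GLP ((dia γ (dia γ φ)).imp (dia γ φ)) := GLP.dia_outer_absorb φ le_rfl

theorem GLP.dia_box_and {β : L} (φ ψ : Formula L) :
    GLP (((dia β φ).and (Formula.box β ψ)).imp (dia β (φ.and ψ))) := by
  have key : GLP (((φ.and ψ).neg).imp (ψ.imp φ.neg)) := by
    apply glp_of_der; apply deduction; apply deduction; apply deduction
    exact Der.mp Der.hyp2 (Der.andI Der.hyp0 Der.hyp1)
  apply glp_of_der; apply deduction; apply deduction
  -- context: [box β (φ.and ψ).neg, (dia β φ).and (box β ψ)] ⊢ ⊥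
  have bx1 : Der [Formula.box β (φ.and ψ).neg, (dia β φ).and (Formula.box β ψ)]
      (Formula.box β (ψ.imp φ.neg)) :=
    Der.mp (Der.ax (GLP.box_mono_rule β key)) Der.hyp0
  have bx2 : Der [Formula.box β (φ.and ψ).neg, (dia β φ).and (Formula.box β ψ)]
      (Formula.box β ψ) := Der.andE2 Der.hyp1
  have bx3 : Der [Formula.box β (φ.and ψ).neg, (dia β φ).and (Formula.box β ψ)]
      (Formula.box β φ.neg) :=
    Der.mp (Der.mp (Der.ax (GLP.dist β ψ φ.neg)) bx1) bx2
  exact Der.mp (Der.andE1 Der.hyp1) bx3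

/-- star: for α < β,  ◇β φ ∧ ◇α ψ → ◇β (φ ∧ ◇α ψ) -/
theorem GLP.star {α β : L} (φ ψ : Formula L) (h : α < β) :
    GLP (((dia β φ).and (dia α ψ)).imp (dia β (φ.and (dia α ψ)))) := by
  have h1 : GLP (((dia β φ).and (dia α ψ)).imp
      ((dia β φ).and (Formula.box β (dia α ψ)))) :=
    GLP.imp_and (GLP.and_left _ _) (GLP.comp (GLP.and_right _ _) (GLP.negintro α β ψ h))
  exact GLP.comp h1 (GLP.dia_box_and _ _)

/-- push: from χ→◇δφ and χ→◇γψ (γ<δ) conclude χ→◇δ(φ∧◇γψ) -/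
theorem GLP.push2 {γ δ : L} {χ φ ψ : Formula L} (h : γ < δ)
    (h1 : GLP (χ.imp (dia δ φ))) (h2 : GLP (χ.imp (dia γ ψ))) :
    GLP (χ.imp (dia δ (φ.and (dia γ ψ)))) :=
  GLP.comp (GLP.imp_and h1 h2) (GLP.star φ ψ h)

/-- from χ→◇aφ and χ→◇γψ (γ<a) conclude χ→◇γ◇γψ -/
theorem GLP.push3 {γ a : L} {χ φ ψ : Formula L} (h : γ < a)
    (h1 : GLP (χ.imp (dia a φ))) (h2 : GLP (χ.imp (dia γ ψ))) :
    GLP (χ.imp (dia γ (dia γ ψ))) := by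
  have := GLP.push2 h h1 h2
  exact GLP.comp this (GLP.comp (GLP.dia_le _ h.le)
    (GLP.dia_mono_rule γ (GLP.and_right _ _)))

end GLPAux
namespace GLPAux

open Formula

variable {L : Type} [LinearOrder L]

/-- a nonempty worm implies ⟨γ⟩⊤ for γ below its head -/
theorem GLP.worm_dia_top {γ b : L} (B' : List L) (h : γ ≤ b) :
    GLP ((worm (b :: B')).imp (dia γ (worm []))) :=
  GLP.comp (GLP.dia_mono_rule b (GLP.imp_top _)) (GLP.dia_le _ h)

/-- concatenation lemma: worm (A₀ ++ γ :: R) ≡ worm A₀ ∧ ⟨γ⟩ worm R, for A₀ ∈ 𝕎_{>γ} -/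
theorem GLP.concat (γ : L) (R : List L) :
    ∀ (A₀ : List L), (∀ β ∈ A₀, γ < β) →
    GLP ((worm (A₀ ++ γ :: R)).imp ((worm A₀).and (dia γ (worm R)))) ∧
    GLP (((worm A₀).and (dia γ (worm R))).imp (worm (A₀ ++ γ :: R))) := by
  intro A₀
  induction A₀ with
  | nil =>
    intro _
    constructor
    · exact GLP.imp_and (GLP.imp_top _) (GLP.imp_refl _)
    · exact GLP.and_right _ _
  | cons a A₀ ih =>
    intro hb
    have ha : γ < a := hb a (by simp)
    have hA₀ : ∀ β ∈ A₀, γ < β := fun β m => hb β (by simp [m])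
    obtain ⟨ih1, ih2⟩ := ih hA₀
    constructor
    · have s1 : GLP ((worm (a :: A₀ ++ γ :: R)).imp
          (dia a ((worm A₀).and (dia γ (worm R))))) := GLP.dia_mono_rule a ih1
      apply GLP.imp_and
      · exact GLP.comp s1 (GLP.dia_mono_rule a (GLP.and_left _ _))
      · exact GLP.comp (GLP.comp s1 (GLP.dia_mono_rule a (GLP.and_right _ _)))
          (GLP.dia_outer_absorb _ ha.le)
    · have s1 : GLP (((worm (a :: A₀)).and (dia γ (worm R))).imp
          (dia a ((worm A₀).and (dia γ (worm R))))) := GLP.star _ _ ha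
      exact GLP.comp s1 (GLP.dia_mono_rule a ih2)

theorem GLP.concatL (γ : L) (R A₀ : List L) (h : ∀ β ∈ A₀, γ < β) :
    GLP ((worm (A₀ ++ γ :: R)).imp (worm A₀)) :=
  GLP.comp (GLP.concat γ R A₀ h).1 (GLP.and_left _ _)

theorem GLP.concatR (γ : L) (R A₀ : List L) (h : ∀ β ∈ A₀, γ < β) :
    GLP ((worm (A₀ ++ γ :: R)).imp (dia γ (worm R))) :=
  GLP.comp (GLP.concat γ R A₀ h).1 (GLP.and_right _ _)

/-- split a list at the first occurrence of γ -/
theorem split_first {γ : L} : ∀ {l : List L}, γ ∈ l →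
    ∃ l₀ l₁, l = l₀ ++ γ :: l₁ ∧ γ ∉ l₀ := by
  intro l
  induction l with
  | nil => intro h; simp at h
  | cons a t ih =>
    intro h
    by_cases hc : a = γ
    · exact ⟨[], t, by simp [hc], by simp⟩
    · have ht : γ ∈ t := by
        rcases List.mem_cons.1 h with h' | h'
        · exact absurd h'.symm hc
        · exact h'
      obtain ⟨l₀, l₁, he, hn⟩ := ih ht
      exact ⟨a :: l₀, l₁, by simp [he], by
        simp only [List.mem_cons, not_or]
        exact ⟨fun hh => hc hh.symm, hn⟩⟩

theorem exists_min : ∀ (l : List L), l ≠ [] → ∃ m, m ∈ l ∧ ∀ x ∈ l, m ≤ x := by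
  intro l
  induction l with
  | nil => intro h; exact absurd rfl h
  | cons a t ih =>
    intro _
    rcases eq_or_ne t [] with ht | ht
    · exact ⟨a, by simp [ht], by simp [ht]⟩
    · obtain ⟨m, hm, hle⟩ := ih ht
      rcases le_total a m with h | h
      · exact ⟨a, by simp, by
          intro x hx
          rcases List.mem_cons.1 hx with h' | h'
          · exact h'.symm.le.trans le_rfl |>.trans' le_rfl |>.trans le_rfl |>.trans_eq rfl |>.trans le_rfl
          · exact le_trans h (hle x h')⟩
      · exact ⟨m, by simp [hm], by
          intro x hx
          rcases List.mem_cons.1 hx with h' | h'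
          · exact h' ▸ h
          · exact hle x h'⟩

/-- the two push derivation lemmas -/
theorem GLP.toDia {γ δ : L} (hγδ : γ < δ) (A₀ A₁ Y : List L) (hA₀ : ∀ β ∈ A₀, γ < β)
    (h1 : GLP ((worm Y).imp (dia δ (worm A₀))))
    (h2 : GLP ((worm Y).imp (dia γ (worm A₁)))) :
    GLP ((worm Y).imp (dia γ (worm (A₀ ++ γ :: A₁)))) := by
  have p := GLP.push2 hγδ h1 h2
  exact GLP.comp (GLP.comp p (GLP.dia_mono_rule δ (GLP.concat γ A₁ A₀ hA₀).2))
    (GLP.dia_le _ hγδ.le)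

theorem GLP.toDiaGam {γ a : L} (hγa : γ < a) (X' A₁ Y : List L)
    (h1 : GLP ((worm Y).imp (dia a (worm X'))))
    (h2 : GLP ((worm Y).imp (dia γ (worm A₁)))) :
    GLP ((worm Y).imp (dia γ (worm (γ :: A₁)))) :=
  GLP.push3 hγa h1 h2

end GLPAux
namespace GLPAux

open Formula

variable {L : Type} [LinearOrder L]

/-- trichotomy shape -/
def TriProp (γ : L) (A B : List L) : Prop :=
  (GLP ((worm A).imp (worm B)) ∧ GLP ((worm B).imp (worm A)))
  ∨ GLP ((worm B).imp (dia γ (worm A)))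
  ∨ GLP ((worm A).imp (dia γ (worm B)))

theorem TriProp.swap {γ : L} {A B : List L} (h : TriProp γ A B) : TriProp γ B A := by
  rcases h with ⟨h1, h2⟩ | h | h
  · exact Or.inl ⟨h2, h1⟩
  · exact Or.inr (Or.inr h)
  · exact Or.inr (Or.inl h)

theorem TriProp.mono {γ γ' : L} {A B : List L} (hle : γ ≤ γ') (h : TriProp γ' A B) :
    TriProp γ A B := by
  rcases h with he | h | h
  · exact Or.inl he
  · exact Or.inr (Or.inl (GLP.comp h (GLP.dia_le _ hle)))
  · exact Or.inr (Or.inr (GLP.comp h (GLP.dia_le _ hle)))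

/-- the type of the induction hypothesis -/
def TriIH (n : ℕ) : Prop :=
  ∀ m : ℕ, m < n → ∀ (γ : L) (A B : List L), (∀ β ∈ A, γ ≤ β) → (∀ β ∈ B, γ ≤ β) →
    A.length + B.length ≤ m → TriProp γ A B

/-- Case: γ ∉ Y (Y nonempty), X = X₀ ++ γ :: X₁.  Yields TriProp γ Y X. -/
theorem tri_one {n : ℕ} (IH : TriIH (L := L) n) (γ : L) (Y X₀ X₁ : List L)
    (hY : ∀ β ∈ Y, γ < β) (hYne : Y ≠ [])
    (hX₀ : ∀ β ∈ X₀, γ < β) (hX₁ : ∀ β ∈ X₁, γ ≤ β)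
    (hlen : Y.length + (X₀ ++ γ :: X₁).length ≤ n) :
    TriProp γ Y (X₀ ++ γ :: X₁) := by
  have hlenX : (X₀ ++ γ :: X₁).length = X₀.length + X₁.length + 1 := by
    simp [List.length_append]; omega
  have hYle : ∀ β ∈ Y, γ ≤ β := fun β m => (hY β m).le
  -- compare Y with X₁
  have t1 : TriProp γ Y X₁ := by
    apply IH (Y.length + X₁.length) (by omega) γ Y X₁ hYle hX₁ le_rfl
  have cR : GLP ((worm (X₀ ++ γ :: X₁)).imp (dia γ (worm X₁))) := GLP.concatR γ X₁ X₀ hX₀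
  rcases t1 with ⟨e1, e2⟩ | t | t
  · -- Y ≡ X₁ : Y < X
    exact Or.inr (Or.inl (GLP.comp cR (GLP.dia_mono_rule γ e2)))
  · -- Y < X₁ : Y < X
    exact Or.inr (Or.inl (GLP.comp cR (GLP.comp (GLP.dia_mono_rule γ t) (GLP.dia_dia _))))
  · -- X₁ < Y
    rcases X₀ with _ | ⟨x₀, X₀'⟩
    · -- X₀ = [] : X < Y
      rcases Y with _ | ⟨y, Y'⟩
      · exact absurd rfl hYne
      · refine Or.inr (Or.inr ?_)
        have hy : γ < y := hY y (by simp)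
        exact GLP.toDiaGam hy Y' X₁ (y :: Y') (GLP.imp_refl _) t
    · -- X₀ nonempty: compare Y with X₀ at δ = min (Y ++ X₀)
      obtain ⟨δ, hδmem, hδmin⟩ := exists_min (Y ++ x₀ :: X₀') (by simp)
      have hγδ : γ < δ := by
        rcases List.mem_append.1 hδmem with h | h
        · exact hY δ h
        · exact hX₀ δ h
      have hYδ : ∀ β ∈ Y, δ ≤ β := fun β m => hδmin β (List.mem_append.2 (Or.inl m))
      have hXδ : ∀ β ∈ x₀ :: X₀', δ ≤ β := fun β m => hδmin β (List.mem_append.2 (Or.inr m))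
      have t2 : TriProp δ Y (x₀ :: X₀') := by
        apply IH (Y.length + (x₀ :: X₀').length) (by simp [List.length_append] at hlen ⊢; omega)
          δ Y (x₀ :: X₀') hYδ hXδ le_rfl
      have cL : GLP ((worm ((x₀ :: X₀') ++ γ :: X₁)).imp (worm (x₀ :: X₀'))) :=
        GLP.concatL γ X₁ (x₀ :: X₀') hX₀
      rcases t2 with ⟨f1, f2⟩ | g | g
      ·
        -- Y ≡ X₀ and Y → ◇γX₁ :  X ≡ Y?  No: Y ≡ X.
        refine Or.inl ⟨?_, ?_⟩
        · exact GLP.comp (GLP.imp_and f1 t) (GLP.concat γ X₁ (x₀ :: X₀') hX₀).2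
        · exact GLP.comp cL f2
      · -- Y <δ X₀ : Y < X
        exact Or.inr (Or.inl (GLP.comp (GLP.comp cL g) (GLP.dia_le _ hγδ.le)))
      · -- X₀ <δ Y : X < Y
        exact Or.inr (Or.inr (GLP.toDia hγδ (x₀ :: X₀') X₁ Y hX₀ g t))

end GLPAux
namespace GLPAux

open Formula

variable {L : Type} [LinearOrder L]

set_option linter.unusedSectionVars false

theorem bounds_assemble {γ : L} {A₀ A₁ : List L} (h₀ : ∀ β ∈ A₀, γ < β)
    (h₁ : ∀ β ∈ A₁, γ ≤ β) : ∀ β ∈ A₀ ++ γ :: A₁, γ ≤ β := by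
  intro β m
  rcases List.mem_append.1 m with h | h
  · exact (h₀ β h).le
  · rcases List.mem_cons.1 h with h | h
    · exact h.symm.le.trans le_rfl |>.trans le_rfl
    · exact h₁ β h

/-- Case 7b : both contain γ, and A₁ <γ B₁. -/
theorem tri_lt {n : ℕ} (IH : TriIH (L := L) n)
    (irr : ∀ (D : List L) (δ : L), ¬ GLP ((worm D).imp (dia δ (worm D))))
    (γ : L) (A₀ A₁ B₀ B₁ : List L)
    (hA₀ : ∀ β ∈ A₀, γ < β) (hA₁ : ∀ β ∈ A₁, γ ≤ β)
    (hB₀ : ∀ β ∈ B₀, γ < β) (hB₁ : ∀ β ∈ B₁, γ ≤ β)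
    (h : GLP ((worm B₁).imp (dia γ (worm A₁))))
    (hlen : (A₀ ++ γ :: A₁).length + (B₀ ++ γ :: B₁).length ≤ n) :
    TriProp γ (A₀ ++ γ :: A₁) (B₀ ++ γ :: B₁) := by
  have hA : ∀ β ∈ A₀ ++ γ :: A₁, γ ≤ β := bounds_assemble hA₀ hA₁
  have cRB : GLP ((worm (B₀ ++ γ :: B₁)).imp (dia γ (worm B₁))) := GLP.concatR γ B₁ B₀ hB₀
  have cRA : GLP ((worm (A₀ ++ γ :: A₁)).imp (dia γ (worm A₁))) := GLP.concatR γ A₁ A₀ hA₀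
  -- compare A with B₁
  have t1 : TriProp γ (A₀ ++ γ :: A₁) B₁ := by
    apply IH ((A₀ ++ γ :: A₁).length + B₁.length)
      (by simp [List.length_append] at hlen ⊢; omega) γ _ _ hA hB₁ le_rfl
  rcases t1 with ⟨e1, e2⟩ | t | t
  · -- A ≡ B₁ : A < B
    exact Or.inr (Or.inl (GLP.comp cRB (GLP.dia_mono_rule γ e2)))
  · -- A < B₁ : A < B
    exact Or.inr (Or.inl (GLP.comp cRB (GLP.comp (GLP.dia_mono_rule γ t) (GLP.dia_dia _))))
  · -- B₁ < A, i.e. t : worm A → ◇γ worm B₁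
    rcases A₀ with _ | ⟨a, A₀''⟩
    · -- A₀ = [] : contradiction with irreflexivity
      exfalso
      apply irr ([] ++ γ :: A₁) γ
      exact GLP.comp t (GLP.dia_mono_rule γ h)
    · rcases B₀ with _ | ⟨b, B₀''⟩
      · -- B₀ = [] : B < A
        refine Or.inr (Or.inr ?_)
        have ha : γ < a := hA₀ a (by simp)
        have h1 : GLP ((worm ((a :: A₀'') ++ γ :: A₁)).imp
            (dia a (worm (A₀'' ++ γ :: A₁)))) := GLP.imp_refl _
        exact GLP.toDiaGam ha (A₀'' ++ γ :: A₁) B₁ ((a :: A₀'') ++ γ :: A₁) h1 t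
      · -- both heads nonempty : compare A₀ with B₀ at δ
        obtain ⟨δ, hδmem, hδmin⟩ := exists_min ((a :: A₀'') ++ b :: B₀'') (by simp)
        have hγδ : γ < δ := by
          rcases List.mem_append.1 hδmem with hm | hm
          · exact hA₀ δ hm
          · exact hB₀ δ hm
        have hAδ : ∀ β ∈ a :: A₀'', δ ≤ β := fun β m => hδmin β (List.mem_append.2 (Or.inl m))
        have hBδ : ∀ β ∈ b :: B₀'', δ ≤ β := fun β m => hδmin β (List.mem_append.2 (Or.inr m))
        have t2 : TriProp δ (a :: A₀'') (b :: B₀'') := by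
          apply IH ((a :: A₀'').length + (b :: B₀'').length)
            (by simp [List.length_append] at hlen ⊢; omega) δ _ _ hAδ hBδ le_rfl
        have cLA : GLP ((worm ((a :: A₀'') ++ γ :: A₁)).imp (worm (a :: A₀''))) :=
          GLP.concatL γ A₁ (a :: A₀'') hA₀
        have cLB : GLP ((worm ((b :: B₀'') ++ γ :: B₁)).imp (worm (b :: B₀''))) :=
          GLP.concatL γ B₁ (b :: B₀'') hB₀
        -- B → ◇γ A₁ (via B₁ and h)
        have hBA₁ : GLP ((worm ((b :: B₀'') ++ γ :: B₁)).imp (dia γ (worm A₁))) :=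
          GLP.comp cRB (GLP.comp (GLP.dia_mono_rule γ h) (GLP.dia_dia _))
        rcases t2 with ⟨f1, f2⟩ | g | g
        · -- A₀ ≡ B₀ : A ≡ B
          refine Or.inl ⟨?_, ?_⟩
          · exact GLP.comp (GLP.imp_and (GLP.comp cLA f1) t)
              (GLP.concat γ B₁ (b :: B₀'') hB₀).2
          · exact GLP.comp (GLP.imp_and (GLP.comp cLB f2) hBA₁)
              (GLP.concat γ A₁ (a :: A₀'') hA₀).2
        · -- A₀ <δ B₀ : A < B
          exact Or.inr (Or.inl (GLP.toDia hγδ (a :: A₀'') A₁ ((b :: B₀'') ++ γ :: B₁)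
            hA₀ (GLP.comp cLB g) hBA₁))
        · -- B₀ <δ A₀ : B < A
          exact Or.inr (Or.inr (GLP.toDia hγδ (b :: B₀'') B₁ ((a :: A₀'') ++ γ :: A₁)
            hB₀ (GLP.comp cLA g) t))

end GLPAux
namespace GLPAux

open Formula

variable {L : Type} [LinearOrder L]

set_option linter.unusedSectionVars false

/-- Case 7 : both contain γ. -/
theorem tri_both {n : ℕ} (IH : TriIH (L := L) n)
    (irr : ∀ (D : List L) (δ : L), ¬ GLP ((worm D).imp (dia δ (worm D))))
    (γ : L) (A₀ A₁ B₀ B₁ : List L)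
    (hA₀ : ∀ β ∈ A₀, γ < β) (hA₁ : ∀ β ∈ A₁, γ ≤ β)
    (hB₀ : ∀ β ∈ B₀, γ < β) (hB₁ : ∀ β ∈ B₁, γ ≤ β)
    (hlen : (A₀ ++ γ :: A₁).length + (B₀ ++ γ :: B₁).length ≤ n) :
    TriProp γ (A₀ ++ γ :: A₁) (B₀ ++ γ :: B₁) := by
  have cRB : GLP ((worm (B₀ ++ γ :: B₁)).imp (dia γ (worm B₁))) := GLP.concatR γ B₁ B₀ hB₀
  have cRA : GLP ((worm (A₀ ++ γ :: A₁)).imp (dia γ (worm A₁))) := GLP.concatR γ A₁ A₀ hA₀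
  have t0 : TriProp γ A₁ B₁ := by
    apply IH (A₁.length + B₁.length)
      (by simp [List.length_append] at hlen ⊢; omega) γ _ _ hA₁ hB₁ le_rfl
  rcases t0 with ⟨e1, e2⟩ | t | t
  · -- A₁ ≡ B₁
    rcases A₀ with _ | ⟨a, A₀''⟩
    · rcases B₀ with _ | ⟨b, B₀''⟩
      · exact Or.inl ⟨GLP.dia_mono_rule γ e1, GLP.dia_mono_rule γ e2⟩
      · -- A = γ::A₁, B₀ nonempty : A < B
        refine Or.inr (Or.inl ?_)
        have hb : γ < b := hB₀ b (by simp)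
        exact GLP.toDiaGam hb (B₀'' ++ γ :: B₁) A₁ ((b :: B₀'') ++ γ :: B₁)
          (GLP.imp_refl _) (GLP.comp cRB (GLP.dia_mono_rule γ e2))
    · rcases B₀ with _ | ⟨b, B₀''⟩
      · -- B = γ::B₁, A₀ nonempty : B < A
        refine Or.inr (Or.inr ?_)
        have ha : γ < a := hA₀ a (by simp)
        exact GLP.toDiaGam ha (A₀'' ++ γ :: A₁) B₁ ((a :: A₀'') ++ γ :: A₁)
          (GLP.imp_refl _) (GLP.comp cRA (GLP.dia_mono_rule γ e1))
      · -- both nonempty: compare heads at δ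
        obtain ⟨δ, hδmem, hδmin⟩ := exists_min ((a :: A₀'') ++ b :: B₀'') (by simp)
        have hγδ : γ < δ := by
          rcases List.mem_append.1 hδmem with hm | hm
          · exact hA₀ δ hm
          · exact hB₀ δ hm
        have hAδ : ∀ β ∈ a :: A₀'', δ ≤ β := fun β m => hδmin β (List.mem_append.2 (Or.inl m))
        have hBδ : ∀ β ∈ b :: B₀'', δ ≤ β := fun β m => hδmin β (List.mem_append.2 (Or.inr m))
        have t2 : TriProp δ (a :: A₀'') (b :: B₀'') := by
          apply IH ((a :: A₀'').length + (b :: B₀'').length)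
            (by simp [List.length_append] at hlen ⊢; omega) δ _ _ hAδ hBδ le_rfl
        have cLA : GLP ((worm ((a :: A₀'') ++ γ :: A₁)).imp (worm (a :: A₀''))) :=
          GLP.concatL γ A₁ (a :: A₀'') hA₀
        have cLB : GLP ((worm ((b :: B₀'') ++ γ :: B₁)).imp (worm (b :: B₀''))) :=
          GLP.concatL γ B₁ (b :: B₀'') hB₀
        rcases t2 with ⟨f1, f2⟩ | g | g
        · refine Or.inl ⟨?_, ?_⟩
          · exact GLP.comp (GLP.imp_and (GLP.comp cLA f1)
              (GLP.comp cRA (GLP.dia_mono_rule γ e1))) (GLP.concat γ B₁ (b :: B₀'') hB₀).2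
          · exact GLP.comp (GLP.imp_and (GLP.comp cLB f2)
              (GLP.comp cRB (GLP.dia_mono_rule γ e2))) (GLP.concat γ A₁ (a :: A₀'') hA₀).2
        · exact Or.inr (Or.inl (GLP.toDia hγδ (a :: A₀'') A₁ ((b :: B₀'') ++ γ :: B₁)
            hA₀ (GLP.comp cLB g) (GLP.comp cRB (GLP.dia_mono_rule γ e2))))
        · exact Or.inr (Or.inr (GLP.toDia hγδ (b :: B₀'') B₁ ((a :: A₀'') ++ γ :: A₁)
            hB₀ (GLP.comp cLA g) (GLP.comp cRA (GLP.dia_mono_rule γ e1))))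
  · exact tri_lt IH irr γ A₀ A₁ B₀ B₁ hA₀ hA₁ hB₀ hB₁ t hlen
  · exact (tri_lt IH irr γ B₀ B₁ A₀ A₁ hB₀ hB₁ hA₀ hA₁ t (by omega)).swap

theorem triN (irr : ∀ (D : List L) (δ : L), ¬ GLP ((worm D).imp (dia δ (worm D)))) :
    ∀ (n : ℕ) (γ : L) (A B : List L), (∀ β ∈ A, γ ≤ β) → (∀ β ∈ B, γ ≤ β) →
    A.length + B.length ≤ n → TriProp γ A B := by
  intro n
  induction n using Nat.strong_induction_on with
  | _ n IH =>
    intro γ A B hA hB hlen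
    rcases A with _ | ⟨a, A'⟩
    · rcases B with _ | ⟨b, B'⟩
      · exact Or.inl ⟨GLP.imp_refl _, GLP.imp_refl _⟩
      · exact Or.inr (Or.inl (GLP.worm_dia_top B' (hB b (by simp))))
    · rcases B with _ | ⟨b, B'⟩
      · exact Or.inr (Or.inr (GLP.worm_dia_top A' (hA a (by simp))))
      · obtain ⟨γ', hγ'mem, hγ'min⟩ := exists_min ((a :: A') ++ b :: B') (by simp)
        have hγγ' : γ ≤ γ' := by
          rcases List.mem_append.1 hγ'mem with hm | hm
          · exact hA γ' hm
          · exact hB γ' hm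
        have hAγ' : ∀ β ∈ a :: A', γ' ≤ β := fun β m => hγ'min β (List.mem_append.2 (Or.inl m))
        have hBγ' : ∀ β ∈ b :: B', γ' ≤ β := fun β m => hγ'min β (List.mem_append.2 (Or.inr m))
        refine TriProp.mono hγγ' ?_
        by_cases hAin : γ' ∈ a :: A'
        · by_cases hBin : γ' ∈ b :: B'
          · obtain ⟨A₀, A₁, hEA, hnA⟩ := split_first hAin
            obtain ⟨B₀, B₁, hEB, hnB⟩ := split_first hBin
            rw [hEA, hEB]
            apply tri_both IH irr γ' A₀ A₁ B₀ B₁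
            · intro β m
              exact lt_of_le_of_ne (hAγ' β (by rw [hEA]; simp [m]))
                (fun hc => hnA (hc ▸ m))
            · intro β m; exact hAγ' β (by rw [hEA]; simp [m])
            · intro β m
              exact lt_of_le_of_ne (hBγ' β (by rw [hEB]; simp [m]))
                (fun hc => hnB (hc ▸ m))
            · intro β m; exact hBγ' β (by rw [hEB]; simp [m])
            · rw [← hEA, ← hEB]; exact hlen
          · -- γ' ∈ A only : Y := B
            obtain ⟨A₀, A₁, hEA, hnA⟩ := split_first hAin
            rw [hEA]
            have hYB : ∀ β ∈ b :: B', γ' < β := fun β m =>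
              lt_of_le_of_ne (hBγ' β m) (fun hc => hBin (hc ▸ m))
            refine (tri_one IH γ' (b :: B') A₀ A₁ hYB (by simp) ?_ ?_ ?_).swap
            · intro β m
              exact lt_of_le_of_ne (hAγ' β (by rw [hEA]; simp [m]))
                (fun hc => hnA (hc ▸ m))
            · intro β m; exact hAγ' β (by rw [hEA]; simp [m])
            · rw [← hEA]; omega
        · -- γ' ∈ B only
          have hBin : γ' ∈ b :: B' := by
            rcases List.mem_append.1 hγ'mem with hm | hm
            · exact absurd hm hAin
            · exact hm
          obtain ⟨B₀, B₁, hEB, hnB⟩ := split_first hBin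
          rw [hEB]
          have hYA : ∀ β ∈ a :: A', γ' < β := fun β m =>
            lt_of_le_of_ne (hAγ' β m) (fun hc => hAin (hc ▸ m))
          refine tri_one IH γ' (a :: A') B₀ B₁ hYA (by simp) ?_ ?_ ?_
          · intro β m
            exact lt_of_le_of_ne (hBγ' β (by rw [hEB]; simp [m]))
              (fun hc => hnB (hc ▸ m))
          · intro β m; exact hBγ' β (by rw [hEB]; simp [m])
          · rw [← hEB]; omega

/-- Full trichotomy for worms in 𝕎_γ. -/
theorem GLP.trichotomy (irr : ∀ (D : List L) (δ : L), ¬ GLP ((worm D).imp (dia δ (worm D))))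
    (γ : L) (A B : List L) (hA : ∀ β ∈ A, γ ≤ β) (hB : ∀ β ∈ B, γ ≤ β) :
    TriProp γ A B :=
  triN irr (A.length + B.length) γ A B hA hB le_rfl

end GLPAux
namespace GLPAux

open Formula

variable {L : Type} [LinearOrder L]

set_option linter.unusedSectionVars false

theorem GLP.and_comm_imp (φ ψ : Formula L) : GLP ((φ.and ψ).imp (ψ.and φ)) :=
  GLP.imp_and (GLP.and_right _ _) (GLP.and_left _ _)

/-- result shape of the conjunction lemma -/
def ConjRes (γ : L) (A B : List L) : Prop :=
  ∃ C : List L, (∀ β ∈ C, γ ≤ β) ∧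
    GLP ((worm C).imp ((worm A).and (worm B))) ∧
    GLP (((worm A).and (worm B)).imp (worm C))

theorem ConjRes.swap {γ : L} {A B : List L} (h : ConjRes γ A B) : ConjRes γ B A := by
  obtain ⟨C, bd, f, b⟩ := h
  exact ⟨C, bd, GLP.comp f (GLP.and_comm_imp _ _), GLP.comp (GLP.and_comm_imp _ _) b⟩

theorem ConjRes.monoγ {γ γ' : L} {A B : List L} (hle : γ ≤ γ') (h : ConjRes γ' A B) :
    ConjRes γ A B := by
  obtain ⟨C, bd, f, b⟩ := h
  exact ⟨C, fun β m => hle.trans (bd β m), f, b⟩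

def ConjIH (n : ℕ) : Prop :=
  ∀ m : ℕ, m < n → ∀ (γ : L) (A B : List L), (∀ β ∈ A, γ ≤ β) → (∀ β ∈ B, γ ≤ β) →
    A.length + B.length ≤ m → ConjRes γ A B

theorem conj_nil_left (γ : L) (B : List L) (hB : ∀ β ∈ B, γ ≤ β) :
    ConjRes γ ([] : List L) B :=
  ⟨B, hB, GLP.imp_and (GLP.imp_top _) (GLP.imp_refl _), GLP.and_right _ _⟩

/-- case: γ ∈ A (A = A₀ ++ γ :: A₁), γ ∉ B, B nonempty -/
theorem conj_one {n : ℕ} (IH : ConjIH (L := L) n) (γ : L) (A₀ A₁ B : List L)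
    (hA₀ : ∀ β ∈ A₀, γ < β) (hA₁ : ∀ β ∈ A₁, γ ≤ β)
    (hB : ∀ β ∈ B, γ < β) (hBne : B ≠ [])
    (hlen : (A₀ ++ γ :: A₁).length + B.length ≤ n) :
    ConjRes γ (A₀ ++ γ :: A₁) B := by
  obtain ⟨δ, hδmem, hδmin⟩ := exists_min (A₀ ++ B) (by
    intro hc
    exact hBne ((List.append_eq_nil_iff.1 hc).2))
  have hγδ : γ < δ := by
    rcases List.mem_append.1 hδmem with hm | hm
    · exact hA₀ δ hm
    · exact hB δ hm
  have hA₀δ : ∀ β ∈ A₀, δ ≤ β := fun β m => hδmin β (List.mem_append.2 (Or.inl m))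
  have hBδ : ∀ β ∈ B, δ ≤ β := fun β m => hδmin β (List.mem_append.2 (Or.inr m))
  obtain ⟨D₀, bdD, fD, bD⟩ := IH (A₀.length + B.length)
    (by simp [List.length_append] at hlen ⊢; omega) δ A₀ B hA₀δ hBδ le_rfl
  have hD₀γ : ∀ β ∈ D₀, γ < β := fun β m => lt_of_lt_of_le hγδ (bdD β m)
  refine ⟨D₀ ++ γ :: A₁, bounds_assemble hD₀γ hA₁, ?_, ?_⟩
  · -- worm (D₀ ++ γ::A₁) → worm A ∧ worm B
    have c1 : GLP ((worm (D₀ ++ γ :: A₁)).imp (worm D₀)) := GLP.concatL γ A₁ D₀ hD₀γ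
    have c2 : GLP ((worm (D₀ ++ γ :: A₁)).imp (dia γ (worm A₁))) := GLP.concatR γ A₁ D₀ hD₀γ
    apply GLP.imp_and
    · -- → worm A
      refine GLP.comp (GLP.imp_and (GLP.comp c1 (GLP.comp fD (GLP.and_left _ _))) c2) ?_
      exact (GLP.concat γ A₁ A₀ hA₀).2
    · exact GLP.comp c1 (GLP.comp fD (GLP.and_right _ _))
  · -- worm A ∧ worm B → worm (D₀ ++ γ::A₁)
    have d1 : GLP (((worm (A₀ ++ γ :: A₁)).and (worm B)).imp (worm D₀)) := by
      refine GLP.comp (GLP.imp_and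
        (GLP.comp (GLP.and_left _ _) (GLP.concatL γ A₁ A₀ hA₀))
        (GLP.and_right _ _)) bD
    have d2 : GLP (((worm (A₀ ++ γ :: A₁)).and (worm B)).imp (dia γ (worm A₁))) :=
      GLP.comp (GLP.and_left _ _) (GLP.concatR γ A₁ A₀ hA₀)
    exact GLP.comp (GLP.imp_and d1 d2) (GLP.concat γ A₁ D₀ hD₀γ).2

/-- case: both contain γ and A₁ ≤γ B₁ (i.e. worm B₁ → ◇γ worm A₁) -/
theorem conj_both_le {n : ℕ} (IH : ConjIH (L := L) n) (γ : L) (A₀ A₁ B₀ B₁ : List L)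
    (hA₀ : ∀ β ∈ A₀, γ < β) (hA₁ : ∀ β ∈ A₁, γ ≤ β)
    (hB₀ : ∀ β ∈ B₀, γ < β) (hB₁ : ∀ β ∈ B₁, γ ≤ β)
    (key : GLP ((dia γ (worm B₁)).imp (dia γ (worm A₁))))
    (hlen : (A₀ ++ γ :: A₁).length + (B₀ ++ γ :: B₁).length ≤ n) :
    ConjRes γ (A₀ ++ γ :: A₁) (B₀ ++ γ :: B₁) := by
  have cLA : GLP ((worm (A₀ ++ γ :: A₁)).imp (worm A₀)) := GLP.concatL γ A₁ A₀ hA₀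
  have cRA : GLP ((worm (A₀ ++ γ :: A₁)).imp (dia γ (worm A₁))) := GLP.concatR γ A₁ A₀ hA₀
  have cLB : GLP ((worm (B₀ ++ γ :: B₁)).imp (worm B₀)) := GLP.concatL γ B₁ B₀ hB₀
  have cRB : GLP ((worm (B₀ ++ γ :: B₁)).imp (dia γ (worm B₁))) := GLP.concatR γ B₁ B₀ hB₀
  rcases eq_or_ne (A₀ ++ B₀) [] with hemp | hne
  · obtain ⟨hA0e, hB0e⟩ := List.append_eq_nil_iff.1 hemp
    subst hA0e; subst hB0e
    refine ⟨γ :: B₁, by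
      intro β m
      rcases List.mem_cons.1 m with h | h
      · exact le_of_eq h.symm
      · exact hB₁ β h, ?_, ?_⟩
    · -- ◇γB₁ → A ∧ B   (A = γ::A₁, B = γ::B₁)
      exact GLP.imp_and key (GLP.imp_refl _)
    · exact GLP.and_right _ _
  · obtain ⟨δ, hδmem, hδmin⟩ := exists_min (A₀ ++ B₀) hne
    have hγδ : γ < δ := by
      rcases List.mem_append.1 hδmem with hm | hm
      · exact hA₀ δ hm
      · exact hB₀ δ hm
    have hA₀δ : ∀ β ∈ A₀, δ ≤ β := fun β m => hδmin β (List.mem_append.2 (Or.inl m))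
    have hB₀δ : ∀ β ∈ B₀, δ ≤ β := fun β m => hδmin β (List.mem_append.2 (Or.inr m))
    obtain ⟨D₀, bdD, fD, bD⟩ := IH (A₀.length + B₀.length)
      (by simp [List.length_append] at hlen ⊢; omega) δ A₀ B₀ hA₀δ hB₀δ le_rfl
    have hD₀γ : ∀ β ∈ D₀, γ < β := fun β m => lt_of_lt_of_le hγδ (bdD β m)
    refine ⟨D₀ ++ γ :: B₁, bounds_assemble hD₀γ hB₁, ?_, ?_⟩
    · have c1 : GLP ((worm (D₀ ++ γ :: B₁)).imp (worm D₀)) := GLP.concatL γ B₁ D₀ hD₀γ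
      have c2 : GLP ((worm (D₀ ++ γ :: B₁)).imp (dia γ (worm B₁))) := GLP.concatR γ B₁ D₀ hD₀γ
      apply GLP.imp_and
      · refine GLP.comp (GLP.imp_and (GLP.comp c1 (GLP.comp fD (GLP.and_left _ _)))
          (GLP.comp c2 key)) ?_
        exact (GLP.concat γ A₁ A₀ hA₀).2
      · refine GLP.comp (GLP.imp_and (GLP.comp c1 (GLP.comp fD (GLP.and_right _ _))) c2) ?_
        exact (GLP.concat γ B₁ B₀ hB₀).2
    · have d1 : GLP (((worm (A₀ ++ γ :: A₁)).and (worm (B₀ ++ γ :: B₁))).imp (worm D₀)) :=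
        GLP.comp (GLP.imp_and (GLP.comp (GLP.and_left _ _) cLA)
          (GLP.comp (GLP.and_right _ _) cLB)) bD
      have d2 : GLP (((worm (A₀ ++ γ :: A₁)).and (worm (B₀ ++ γ :: B₁))).imp
          (dia γ (worm B₁))) := GLP.comp (GLP.and_right _ _) cRB
      exact GLP.comp (GLP.imp_and d1 d2) (GLP.concat γ B₁ D₀ hD₀γ).2

end GLPAux
namespace GLPAux

open Formula

variable {L : Type} [LinearOrder L]

set_option linter.unusedSectionVars false

theorem conjN (irr : ∀ (D : List L) (δ : L), ¬ GLP ((worm D).imp (dia δ (worm D)))) :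
    ∀ (n : ℕ) (γ : L) (A B : List L), (∀ β ∈ A, γ ≤ β) → (∀ β ∈ B, γ ≤ β) →
    A.length + B.length ≤ n → ConjRes γ A B := by
  intro n
  induction n using Nat.strong_induction_on with
  | _ n IH =>
    intro γ A B hA hB hlen
    rcases eq_or_ne A [] with hAe | hAne
    · subst hAe; exact conj_nil_left γ B hB
    rcases eq_or_ne B [] with hBe | hBne
    · subst hBe; exact (conj_nil_left γ A hA).swap
    obtain ⟨γ', hγ'mem, hγ'min⟩ := exists_min (A ++ B)
      (by intro hc; exact hAne (List.append_eq_nil_iff.1 hc).1)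
    have hγγ' : γ ≤ γ' := by
      rcases List.mem_append.1 hγ'mem with hm | hm
      · exact hA γ' hm
      · exact hB γ' hm
    have hAγ' : ∀ β ∈ A, γ' ≤ β := fun β m => hγ'min β (List.mem_append.2 (Or.inl m))
    have hBγ' : ∀ β ∈ B, γ' ≤ β := fun β m => hγ'min β (List.mem_append.2 (Or.inr m))
    refine ConjRes.monoγ hγγ' ?_
    by_cases hAin : γ' ∈ A
    · by_cases hBin : γ' ∈ B
      · obtain ⟨A₀, A₁, hEA, hnA⟩ := split_first hAin
        obtain ⟨B₀, B₁, hEB, hnB⟩ := split_first hBin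
        have hA₀ : ∀ β ∈ A₀, γ' < β := fun β m =>
          lt_of_le_of_ne (hAγ' β (by rw [hEA]; simp [m])) (fun hc => hnA (hc ▸ m))
        have hA₁ : ∀ β ∈ A₁, γ' ≤ β := fun β m => hAγ' β (by rw [hEA]; simp [m])
        have hB₀ : ∀ β ∈ B₀, γ' < β := fun β m =>
          lt_of_le_of_ne (hBγ' β (by rw [hEB]; simp [m])) (fun hc => hnB (hc ▸ m))
        have hB₁ : ∀ β ∈ B₁, γ' ≤ β := fun β m => hBγ' β (by rw [hEB]; simp [m])
        rw [hEA, hEB]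
        rcases GLP.trichotomy irr γ' A₁ B₁ hA₁ hB₁ with ⟨e1, e2⟩ | t | t
        · exact conj_both_le IH γ' A₀ A₁ B₀ B₁ hA₀ hA₁ hB₀ hB₁
            (GLP.dia_mono_rule γ' e2) (by rw [← hEA, ← hEB]; exact hlen)
        · exact conj_both_le IH γ' A₀ A₁ B₀ B₁ hA₀ hA₁ hB₀ hB₁
            (GLP.comp (GLP.dia_mono_rule γ' t) (GLP.dia_dia _))
            (by rw [← hEA, ← hEB]; exact hlen)
        · exact (conj_both_le IH γ' B₀ B₁ A₀ A₁ hB₀ hB₁ hA₀ hA₁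
            (GLP.comp (GLP.dia_mono_rule γ' t) (GLP.dia_dia _))
            (by rw [← hEA, ← hEB]; omega)).swap
      · obtain ⟨A₀, A₁, hEA, hnA⟩ := split_first hAin
        have hA₀ : ∀ β ∈ A₀, γ' < β := fun β m =>
          lt_of_le_of_ne (hAγ' β (by rw [hEA]; simp [m])) (fun hc => hnA (hc ▸ m))
        have hA₁ : ∀ β ∈ A₁, γ' ≤ β := fun β m => hAγ' β (by rw [hEA]; simp [m])
        have hBlt : ∀ β ∈ B, γ' < β := fun β m =>
          lt_of_le_of_ne (hBγ' β m) (fun hc => hBin (hc ▸ m))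
        rw [hEA]
        exact conj_one IH γ' A₀ A₁ B hA₀ hA₁ hBlt hBne (by rw [← hEA]; exact hlen)
    · have hBin : γ' ∈ B := by
        rcases List.mem_append.1 hγ'mem with hm | hm
        · exact absurd hm hAin
        · exact hm
      obtain ⟨B₀, B₁, hEB, hnB⟩ := split_first hBin
      have hB₀ : ∀ β ∈ B₀, γ' < β := fun β m =>
        lt_of_le_of_ne (hBγ' β (by rw [hEB]; simp [m])) (fun hc => hnB (hc ▸ m))
      have hB₁ : ∀ β ∈ B₁, γ' ≤ β := fun β m => hBγ' β (by rw [hEB]; simp [m])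
      have hAlt : ∀ β ∈ A, γ' < β := fun β m =>
        lt_of_le_of_ne (hAγ' β m) (fun hc => hAin (hc ▸ m))
      rw [hEB]
      exact (conj_one IH γ' B₀ B₁ A hB₀ hB₁ hAlt hAne (by rw [← hEB]; omega)).swap

theorem GLP.conj (irr : ∀ (D : List L) (δ : L), ¬ GLP ((worm D).imp (dia δ (worm D))))
    (γ : L) (A B : List L) (hA : ∀ β ∈ A, γ ≤ β) (hB : ∀ β ∈ B, γ ≤ β) :
    ConjRes γ A B :=
  conjN irr (A.length + B.length) γ A B hA hB le_rfl

/-- the per-element step: if GLP ⊬ A → Ai then ⊢ A ∧ Ai → ◇α A -/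
theorem GLP.step (irr : ∀ (D : List L) (δ : L), ¬ GLP ((worm D).imp (dia δ (worm D))))
    (α : L) (A Ai : List L) (hAm : ∀ β ∈ A, α ≤ β) (hAim : ∀ β ∈ Ai, α ≤ β)
    (hnp : ¬ GLP ((worm A).imp (worm Ai))) :
    GLP (((worm A).and (worm Ai)).imp (dia α (worm A))) := by
  obtain ⟨C, bdC, fC, bC⟩ := GLP.conj irr α A Ai hAm hAim
  rcases GLP.trichotomy irr α C A bdC hAm with ⟨e1, e2⟩ | t | t
  · exact absurd (GLP.comp e2 (GLP.comp fC (GLP.and_right _ _))) hnp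
  · exact absurd (GLP.comp t (GLP.dia_mono_rule α (GLP.comp fC (GLP.and_left _ _))))
      (irr A α)
  · exact GLP.comp bC t

end GLPAux
/-- Assuming irreflexivity, if `A, A₁, …, A_I ∈ 𝕎_α` and for each `i`,
`GLP ⊬ A → A_i`, then `GLP ⊢ (A ∧ ⋁ᵢ A_i) → ⟨α⟩A`. -/
theorem adding_worms_increases_order {L : Type} [LinearOrder L] (α : L)
    (irrefl : ∀ (D : List L) (γ : L), ¬ GLP ((worm D).imp (Formula.dia γ (worm D))))
    (A : List L) (As : List (List L))
    (hAm : ∀ β ∈ A, α ≤ β) (hAsm : ∀ Ai ∈ As, ∀ β ∈ Ai, α ≤ β)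
    (hnp : ∀ Ai ∈ As, ¬ GLP ((worm A).imp (worm Ai))) :
    GLP (((worm A).and (disjWorms As)).imp (Formula.dia α (worm A))) := by

  induction As with
  | nil =>
    exact GLPAux.GLP.comp (GLPAux.GLP.and_right _ _) (GLPAux.GLP.bot_imp _)
  | cons Ai As ih =>
    have h1 : GLP (((worm A).and (worm Ai)).imp (Formula.dia α (worm A))) :=
      GLPAux.GLP.step irrefl α A Ai hAm (hAsm Ai (by simp)) (hnp Ai (by simp))
    have h2 : GLP (((worm A).and (disjWorms As)).imp (Formula.dia α (worm A))) :=
      ih (fun X m => hAsm X (by simp [m])) (fun X m => hnp X (by simp [m]))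
    exact GLPAux.GLP.and_or_elim h1 h2
end
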